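/- arXiv:2112.06380 — 3 statements merged into one kernel-verified Lean document; each statement's English description precedes it below -/
import Mathlib

section
/- There is a universal constant C such that the following holds. Let M(φ, id) be a Mallows model on n elements with 0 ≤ φ < 1, let t ≥ 2, and let k be a positive integer with k ≤ min(t, 1/(1 − φ)). Let τ be any permutation of {1, …, t} and let x, y ∈ {1, …, t} be consecutive in τ, i.e., τ^{-1}(y) = τ^{-1}(x) + 1. Then, conditioned on the event that the permutation induced by π on {1, …, t} equals τ, the conditional expectation over π ~ M(φ, id) of the number of elements of {t+1, …, t+k} lying strictly between x and y in the permutation induced by π on {1, …, t+k} (namely, π_{id:t+k}^{-1}(y) − π_{id:t+k}^{-1}(x) − 1) is at most C·k·max(1/t, 1 − φ). -/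
open scoped Classical
open Finset

namespace Mallows

/-- Kendall-tau distance between two permutations of `Fin n`: the number of pairs of
elements whose relative order differs in the two permutations. -/
noncomputable def dKT {n : ℕ} (π σ : Equiv.Perm (Fin n)) : ℕ :=
  (Finset.univ.filter (fun p : Fin n × Fin n =>
    p.1 < p.2 ∧ ¬((π.symm p.1 < π.symm p.2) ↔ (σ.symm p.1 < σ.symm p.2)))).card

/-- Probability mass function of the Mallows model `M(φ, π₀)`. -/
noncomputable def mallowsPMF {n : ℕ} (φ : ℝ) (π₀ π : Equiv.Perm (Fin n)) : ℝ :=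
  φ ^ dKT π π₀ / ∑ σ : Equiv.Perm (Fin n), φ ^ dKT σ π₀

/-- Expectation of `f` under `M(φ, π₀)`. -/
noncomputable def mExp {n : ℕ} (φ : ℝ) (π₀ : Equiv.Perm (Fin n))
    (f : Equiv.Perm (Fin n) → ℝ) : ℝ :=
  ∑ π : Equiv.Perm (Fin n), mallowsPMF φ π₀ π * f π

/-- Probability of the event `A` under `M(φ, π₀)`. -/
noncomputable def mProb {n : ℕ} (φ : ℝ) (π₀ : Equiv.Perm (Fin n))
    (A : Equiv.Perm (Fin n) → Prop) : ℝ :=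
  ∑ π : Equiv.Perm (Fin n), if A π then mallowsPMF φ π₀ π else 0

/-- Total variation distance between two pmfs on permutations of `Fin n`. -/
noncomputable def tvDist {n : ℕ} (p q : Equiv.Perm (Fin n) → ℝ) : ℝ :=
  (∑ π : Equiv.Perm (Fin n), |p π - q π|) / 2

/-- Kullback–Leibler divergence between two pmfs on permutations of `Fin n`. -/
noncomputable def klDiv {n : ℕ} (p q : Equiv.Perm (Fin n) → ℝ) : ℝ :=
  ∑ π : Equiv.Perm (Fin n), p π * Real.log (p π / q π)

/-- Position vector of a permutation: entry `i` is the position `π⁻¹ i` of element `i`. -/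
noncomputable def posVec {n : ℕ} (π : Equiv.Perm (Fin n)) : EuclideanSpace ℝ (Fin n) :=
  WithLp.toLp 2 (fun i => ((π.symm i).1 : ℝ))

/-- Front adjustment vector of `π` with respect to `π̂`: entry `i` counts the elements `j`
with `π̂⁻¹ j < π̂⁻¹ i` and `π⁻¹ j > π⁻¹ i`. -/
noncomputable def leftAdj {n : ℕ} (πh π : Equiv.Perm (Fin n)) : EuclideanSpace ℝ (Fin n) :=
  WithLp.toLp 2 (fun i => ((Finset.univ.filter (fun j : Fin n =>
    πh.symm j < πh.symm i ∧ π.symm i < π.symm j)).card : ℝ))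

/-- Back adjustment vector of `π` with respect to `π̂`: entry `i` counts the elements `j`
with `π̂⁻¹ j > π̂⁻¹ i` and `π⁻¹ j < π⁻¹ i`. -/
noncomputable def rightAdj {n : ℕ} (πh π : Equiv.Perm (Fin n)) : EuclideanSpace ℝ (Fin n) :=
  WithLp.toLp 2 (fun i => ((Finset.univ.filter (fun j : Fin n =>
    πh.symm i < πh.symm j ∧ π.symm j < π.symm i)).card : ℝ))

/-- 0-indexed position of element `j` within the permutation induced by `π` on the first
`t` elements (those with value `< t`). -/
noncomputable def relPos {n : ℕ} (π : Equiv.Perm (Fin n)) (t : ℕ) (j : Fin n) : ℕ :=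
  (Finset.univ.filter (fun i : Fin n => i.1 < t ∧ π.symm i < π.symm j)).card

/-- Conditional expectation of `f` given the event `A`, under `M(φ, π₀)`. -/
noncomputable def mCondExp {n : ℕ} (φ : ℝ) (π₀ : Equiv.Perm (Fin n))
    (f : Equiv.Perm (Fin n) → ℝ) (A : Equiv.Perm (Fin n) → Prop) : ℝ :=
  (∑ π : Equiv.Perm (Fin n), if A π then mallowsPMF φ π₀ π * f π else 0) / mProb φ π₀ A

section Aux
variable {n : ℕ}

/-- Lehmer code: number of `j < i` placed after `i` by `π`. -/
noncomputable def code (π : Equiv.Perm (Fin n)) (i : Fin n) : ℕ :=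
  (Finset.univ.filter (fun j : Fin n => j < i ∧ π.symm i < π.symm j)).card

lemma filter_lt_card (i : Fin n) :
    (Finset.univ.filter (fun j : Fin n => j < i)).card = i.1 := by
  rw [show (Finset.univ.filter (fun j : Fin n => j < i)) = Finset.Iio i by
    ext j; simp [Finset.mem_Iio]]
  exact Fin.card_Iio i

lemma code_le (π : Equiv.Perm (Fin n)) (i : Fin n) : code π i ≤ i.1 := by
  classical
  refine le_trans (Finset.card_le_card ?_) (le_of_eq (filter_lt_card i))
  intro j hj
  simp only [Finset.mem_filter] at hj ⊢
  exact ⟨hj.1, hj.2.1⟩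

lemma code_add (π : Equiv.Perm (Fin n)) (i : Fin n) :
    (Finset.univ.filter (fun j : Fin n => j < i ∧ π.symm j < π.symm i)).card + code π i = i.1 := by
  classical
  have h := Finset.card_filter_add_card_filter_not
    (s := Finset.univ.filter (fun j : Fin n => j < i))
    (p := fun j : Fin n => π.symm j < π.symm i)
  rw [Finset.filter_filter, Finset.filter_filter] at h
  rw [filter_lt_card] at h
  rw [← h]
  congr 1
  unfold code
  congr 1
  ext j
  simp only [Finset.mem_filter, Finset.mem_univ, true_and]
  constructor
  · rintro ⟨h1, h2⟩
    exact ⟨h1, not_lt.mpr (le_of_lt h2)⟩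
  · rintro ⟨h1, h2⟩
    refine ⟨h1, lt_of_le_of_ne (not_lt.mp h2) ?_⟩
    intro hc
    exact absurd (π.symm.injective hc).symm (ne_of_lt h1)

lemma rank_char (π : Equiv.Perm (Fin n)) {i j : Fin n} (hj : j < i) :
    (π.symm i < π.symm j ↔ i.1 ≤ relPos π i.1 j + code π i) := by
  classical
  set P := Finset.univ.filter (fun l : Fin n => l < i ∧ π.symm l < π.symm i) with hP
  have hPc : P.card + code π i = i.1 := code_add π i
  constructor
  · intro h
    have hsub : P ⊆ Finset.univ.filter (fun l : Fin n => l.1 < i.1 ∧ π.symm l < π.symm j) := by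
      intro l hl
      simp only [hP, Finset.mem_filter, Finset.mem_univ, true_and] at hl ⊢
      exact ⟨hl.1, lt_trans hl.2 h⟩
    have := Finset.card_le_card hsub
    unfold relPos
    omega
  · intro h
    by_contra hcon
    have hne : π.symm i ≠ π.symm j := fun hc => absurd (π.symm.injective hc).symm (ne_of_lt hj)
    have hlt : π.symm j < π.symm i := lt_of_le_of_ne (not_lt.mp hcon) (Ne.symm hne)
    have hjP : j ∈ P := by
      simp only [hP, Finset.mem_filter, Finset.mem_univ, true_and]
      exact ⟨hj, hlt⟩
    have hsub : Finset.univ.filter (fun l : Fin n => l.1 < i.1 ∧ π.symm l < π.symm j)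
        ⊆ P.erase j := by
      intro l hl
      simp only [Finset.mem_filter, Finset.mem_univ, true_and] at hl
      rw [Finset.mem_erase]
      refine ⟨fun hc => absurd (hc ▸ hl.2) (lt_irrefl _), ?_⟩
      simp only [hP, Finset.mem_filter, Finset.mem_univ, true_and]
      exact ⟨hl.1, lt_trans hl.2 hlt⟩
    have h2 := Finset.card_le_card hsub
    have h3 : (P.erase j).card = P.card - 1 := Finset.card_erase_of_mem hjP
    have h4 : 1 ≤ P.card := Finset.card_pos.mpr ⟨j, hjP⟩
    unfold relPos at h
    omega

lemma relPos_congr (π π' : Equiv.Perm (Fin n)) (m : ℕ) {j : Fin n}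
    (h : ∀ p q : Fin n, p.1 < m → q.1 < m →
      (π.symm p < π.symm q ↔ π'.symm p < π'.symm q))
    (hj : j.1 < m) : relPos π m j = relPos π' m j := by
  unfold relPos
  congr 1
  ext l
  simp only [Finset.mem_filter, Finset.mem_univ, true_and]
  constructor
  · rintro ⟨h1, h2⟩; exact ⟨h1, (h l j h1 hj).mp h2⟩
  · rintro ⟨h1, h2⟩; exact ⟨h1, (h l j h1 hj).mpr h2⟩

lemma code_congr (π π' : Equiv.Perm (Fin n)) (m : ℕ) {j : Fin n}
    (h : ∀ p q : Fin n, p.1 < m → q.1 < m →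
      (π.symm p < π.symm q ↔ π'.symm p < π'.symm q))
    (hj : j.1 < m) : code π j = code π' j := by
  unfold code
  congr 1
  ext l
  simp only [Finset.mem_filter, Finset.mem_univ, true_and]
  constructor
  · rintro ⟨h1, h2⟩; exact ⟨h1, (h j l hj (lt_trans h1 hj)).mp h2⟩
  · rintro ⟨h1, h2⟩; exact ⟨h1, (h j l hj (lt_trans h1 hj)).mpr h2⟩

lemma codes_det (π π' : Equiv.Perm (Fin n)) (m : ℕ)
    (h : ∀ j : Fin n, j.1 < m → code π j = code π' j) :
    ∀ p q : Fin n, p.1 < m → q.1 < m → (π.symm p < π.symm q ↔ π'.symm p < π'.symm q) := by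
  induction m with
  | zero => intro p q hp hq; omega
  | succ m ih =>
    have ihm := ih (fun j hj => h j (Nat.lt_succ_of_lt hj))
    intro p q hp hq
    rcases Nat.lt_or_ge p.1 m with hpm | hpm
    · rcases Nat.lt_or_ge q.1 m with hqm | hqm
      · exact ihm p q hpm hqm
      · -- q.1 = m, p.1 < m
        have hq' : q.1 = m := le_antisymm (Nat.lt_succ_iff.mp hq) hqm
        have hpq : p < q := by rw [Fin.lt_def]; omega
        have hr := rank_char π (i := q) (j := p) hpq
        have hr' := rank_char π' (i := q) (j := p) hpq
        have hrel : relPos π q.1 p = relPos π' q.1 p :=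
          relPos_congr π π' q.1 (by rw [hq']; exact ihm) (by omega)
        have hc : code π q = code π' q := h q hq
        have hne : π.symm p ≠ π.symm q := fun hc' =>
          absurd (π.symm.injective hc') (ne_of_lt hpq)
        have hne' : π'.symm p ≠ π'.symm q := fun hc' =>
          absurd (π'.symm.injective hc') (ne_of_lt hpq)
        constructor
        · intro hlt
          rcases lt_trichotomy (π'.symm p) (π'.symm q) with h1 | h1 | h1
          · exact h1
          · exact absurd h1 hne'
          · exfalso
            have := hr'.mp h1
            rw [← hrel, ← hc] at this
            have := hr.mpr this
            exact absurd hlt (not_lt.mpr (le_of_lt this))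
        · intro hlt
          rcases lt_trichotomy (π.symm p) (π.symm q) with h1 | h1 | h1
          · exact h1
          · exact absurd h1 hne
          · exfalso
            have := hr.mp h1
            rw [hrel, hc] at this
            have := hr'.mpr this
            exact absurd hlt (not_lt.mpr (le_of_lt this))
    · -- p.1 = m
      have hp' : p.1 = m := le_antisymm (Nat.lt_succ_iff.mp hp) hpm
      rcases Nat.lt_or_ge q.1 m with hqm | hqm
      · have hqp : q < p := by rw [Fin.lt_def]; omega
        have hr := rank_char π (i := p) (j := q) hqp
        have hr' := rank_char π' (i := p) (j := q) hqp
        have hrel : relPos π p.1 q = relPos π' p.1 q :=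
          relPos_congr π π' p.1 (by rw [hp']; exact ihm) (by omega)
        rw [hr, hr', hrel, h p hp]
      · -- p.1 = q.1 = m → p = q
        have : p = q := Fin.ext (by omega)
        subst this
        simp

lemma symm_val_eq_card (π : Equiv.Perm (Fin n)) (j : Fin n) :
    (π.symm j).1 = (Finset.univ.filter (fun p : Fin n => π.symm p < π.symm j)).card := by
  classical
  have himg : (Finset.univ.filter (fun p : Fin n => π.symm p < π.symm j)).image π.symm
      = Finset.univ.filter (fun b : Fin n => b < π.symm j) := by
    ext b
    simp only [Finset.mem_image, Finset.mem_filter, Finset.mem_univ, true_and]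
    constructor
    · rintro ⟨a, ha, rfl⟩; exact ha
    · intro hb; exact ⟨π b, by simpa using hb, by simp⟩
  have hcard := Finset.card_image_of_injective
    (Finset.univ.filter (fun p : Fin n => π.symm p < π.symm j)) π.symm.injective
  rw [himg, filter_lt_card] at hcard
  exact hcard

lemma perm_eq_of_order (π π' : Equiv.Perm (Fin n))
    (h : ∀ p q : Fin n, π.symm p < π.symm q ↔ π'.symm p < π'.symm q) : π = π' := by
  have hsymm : π.symm = π'.symm := by
    apply Equiv.ext
    intro j
    apply Fin.ext
    rw [symm_val_eq_card, symm_val_eq_card]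
    congr 1
    ext p
    simp only [Finset.mem_filter, Finset.mem_univ, true_and]
    exact h p j
  calc π = π.symm.symm := (Equiv.symm_symm π).symm
  _ = π'.symm.symm := by rw [hsymm]
  _ = π' := Equiv.symm_symm π'

lemma prod_fin_val_succ (m : ℕ) : ∏ i : Fin m, (i.1 + 1) = Nat.factorial m := by
  induction m with
  | zero => simp
  | succ m ih =>
    rw [Fin.prod_univ_castSucc]
    simp only [Fin.coe_castSucc, Fin.val_last]
    rw [ih, Nat.factorial_succ, Nat.mul_comm]

noncomputable def enc (π : Equiv.Perm (Fin n)) : ∀ i : Fin n, Fin (i.1 + 1) :=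
  fun i => ⟨code π i, Nat.lt_succ_of_le (code_le π i)⟩

lemma enc_bijective : Function.Bijective (enc (n := n)) := by
  rw [Fintype.bijective_iff_injective_and_card]
  constructor
  · intro π π' hee
    have hc : ∀ j : Fin n, j.1 < n → code π j = code π' j := by
      intro j _
      have := congrFun hee j
      exact congrArg Fin.val this
    exact perm_eq_of_order π π'
      (fun p q => codes_det π π' n hc p q p.isLt q.isLt)
  · rw [Fintype.card_perm, Fintype.card_pi]
    simp only [Fintype.card_fin]
    exact (prod_fin_val_succ n).symm

noncomputable def codeEquiv : Equiv.Perm (Fin n) ≃ (∀ i : Fin n, Fin (i.1 + 1)) :=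
  Equiv.ofBijective _ enc_bijective

lemma code_codeEquiv_symm (v : ∀ i : Fin n, Fin (i.1 + 1)) (i : Fin n) :
    code (codeEquiv.symm v) i = (v i).1 := by
  have h : enc (codeEquiv.symm v) = v := codeEquiv.apply_symm_apply v
  exact congrArg Fin.val (congrFun h i)

lemma dKT_one (π : Equiv.Perm (Fin n)) : dKT π 1 = ∑ i : Fin n, code π i := by
  classical
  unfold dKT code
  rw [Finset.card_filter]
  rw [Fintype.sum_prod_type_right]
  congr 1
  ext i
  rw [Finset.card_filter]
  congr 1
  ext j
  congr 1
  simp only [Equiv.Perm.one_def, Equiv.symm_apply_apply, Equiv.refl_symm, Equiv.refl_apply]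
  by_cases hji : j < i
  · simp only [hji, true_and]
    by_cases hlt : π.symm i < π.symm j
    · have : ¬ π.symm j < π.symm i := not_lt.mpr (le_of_lt hlt)
      simp [hlt, this, hji]
    · have hne : π.symm j ≠ π.symm i := fun hc =>
        absurd (π.symm.injective hc) (ne_of_lt hji)
      have : π.symm j < π.symm i := lt_of_le_of_ne (not_lt.mp hlt) hne
      simp [hlt, this, hji]
  · simp [hji]

lemma rank_mono (π : Equiv.Perm (Fin n)) {t : ℕ} {a b : Fin n} (ha : a.1 < t) (hb : b.1 < t) :
    (π.symm a < π.symm b ↔ relPos π t a < relPos π t b) := by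
  classical
  have fwd : ∀ c d : Fin n, c.1 < t → d.1 < t → π.symm c < π.symm d →
      relPos π t c < relPos π t d := by
    intro c d hc hd hcd
    apply Finset.card_lt_card
    have hsub : Finset.univ.filter (fun i : Fin n => i.1 < t ∧ π.symm i < π.symm c)
        ⊆ Finset.univ.filter (fun i : Fin n => i.1 < t ∧ π.symm i < π.symm d) := by
      intro l hl
      simp only [Finset.mem_filter, Finset.mem_univ, true_and] at hl ⊢
      exact ⟨hl.1, lt_trans hl.2 hcd⟩
    refine (Finset.ssubset_iff_of_subset hsub).mpr ⟨c, ?_, ?_⟩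
    · simp only [Finset.mem_filter, Finset.mem_univ, true_and]
      exact ⟨hc, hcd⟩
    · simp only [Finset.mem_filter, Finset.mem_univ, true_and]
      intro hcon
      exact absurd hcon.2 (lt_irrefl _)
  constructor
  · exact fwd a b ha hb
  · intro h
    rcases lt_trichotomy (π.symm a) (π.symm b) with h1 | h1 | h1
    · exact h1
    · exfalso; rw [show a = b from π.symm.injective h1] at h; exact absurd h (lt_irrefl _)
    · exact absurd (fwd b a hb ha h1) (not_lt.mpr (le_of_lt h))

/-- Embedding of `Fin t` into `Fin n`. -/
@[reducible] def fe (n t : ℕ) (htn : t ≤ n) (x : Fin t) : Fin n := ⟨x.1, lt_of_lt_of_le x.isLt htn⟩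

/-- Extend a permutation of `Fin t` to `Fin n` by the identity beyond `t`. -/
def extPerm (n t : ℕ) (htn : t ≤ n) (τ : Equiv.Perm (Fin t)) : Equiv.Perm (Fin n) where
  toFun j := if h : j.1 < t then ⟨(τ ⟨j.1, h⟩).1, lt_of_lt_of_le (τ ⟨j.1, h⟩).isLt htn⟩ else j
  invFun j := if h : j.1 < t then
    ⟨(τ.symm ⟨j.1, h⟩).1, lt_of_lt_of_le (τ.symm ⟨j.1, h⟩).isLt htn⟩ else j
  left_inv := by
    intro j
    by_cases h : j.1 < t
    · simp only [dif_pos h, (τ ⟨j.1, h⟩).isLt, dif_pos]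
      apply Fin.ext
      simp only []
      have : (⟨(τ ⟨j.1, h⟩).1, (τ ⟨j.1, h⟩).isLt⟩ : Fin t) = τ ⟨j.1, h⟩ := Fin.ext rfl
      rw [this, Equiv.symm_apply_apply]
    · simp only [dif_neg h]
  right_inv := by
    intro j
    by_cases h : j.1 < t
    · simp only [dif_pos h, (τ.symm ⟨j.1, h⟩).isLt, dif_pos]
      apply Fin.ext
      simp only []
      have : (⟨(τ.symm ⟨j.1, h⟩).1, (τ.symm ⟨j.1, h⟩).isLt⟩ : Fin t) = τ.symm ⟨j.1, h⟩ :=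
        Fin.ext rfl
      rw [this, Equiv.apply_symm_apply]
    · simp only [dif_neg h]

lemma extPerm_symm_apply (t : ℕ) (htn : t ≤ n) (τ : Equiv.Perm (Fin t)) (j : Fin n)
    (h : j.1 < t) : (extPerm n t htn τ).symm j
      = ⟨(τ.symm ⟨j.1, h⟩).1, lt_of_lt_of_le (τ.symm ⟨j.1, h⟩).isLt htn⟩ := by
  show (extPerm n t htn τ).invFun j = _
  simp only [extPerm, dif_pos h]

lemma relPos_extPerm (t : ℕ) (htn : t ≤ n) (τ : Equiv.Perm (Fin t)) (j : Fin t) :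
    relPos (extPerm n t htn τ) t (fe n t htn j) = (τ.symm j).1 := by
  classical
  rw [symm_val_eq_card τ j]
  unfold relPos
  symm
  apply Finset.card_bij (fun (a : Fin t) _ => fe n t htn a)
  · intro a ha
    simp only [Finset.mem_filter, Finset.mem_univ, true_and] at ha ⊢
    refine ⟨a.isLt, ?_⟩
    rw [extPerm_symm_apply t htn τ (fe n t htn a) a.isLt,
      extPerm_symm_apply t htn τ (fe n t htn j) j.isLt]
    rw [Fin.lt_def]
    simp only []
    have h1 : (⟨(fe n t htn a).1, a.isLt⟩ : Fin t) = a := Fin.ext rfl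
    have h2 : (⟨(fe n t htn j).1, j.isLt⟩ : Fin t) = j := Fin.ext rfl
    rw [h1, h2]
    exact (Fin.lt_def.mp ha)
  · intro a _ b _ hab
    have : (fe n t htn a).1 = (fe n t htn b).1 := congrArg Fin.val hab
    exact Fin.ext this
  · intro l hl
    simp only [Finset.mem_filter, Finset.mem_univ, true_and] at hl
    obtain ⟨hl1, hl2⟩ := hl
    refine ⟨⟨l.1, hl1⟩, ?_, Fin.ext rfl⟩
    simp only [Finset.mem_filter, Finset.mem_univ, true_and]
    rw [extPerm_symm_apply t htn τ l hl1,
      extPerm_symm_apply t htn τ (fe n t htn j) j.isLt] at hl2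
    rw [Fin.lt_def] at hl2
    simp only [] at hl2
    have h2 : (⟨(fe n t htn j).1, j.isLt⟩ : Fin t) = j := Fin.ext rfl
    rw [h2] at hl2
    exact Fin.lt_def.mpr hl2

/-- The conditioning event: the induced order on the first `t` elements is `τ`. -/
@[reducible] def AevP (n t : ℕ) (htn : t ≤ n) (τ : Equiv.Perm (Fin t)) (π : Equiv.Perm (Fin n)) : Prop :=
  ∀ j : Fin t, relPos π t (fe n t htn j) = (τ.symm j).1

/-- `l` lies strictly between `a` and `b` in `π`. -/
def EbetP (π : Equiv.Perm (Fin n)) (a b l : Fin n) : Prop :=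
  π.symm a < π.symm l ∧ π.symm l < π.symm b

/-- Number of elements of `[t, m)` lying strictly between `a` and `b`. -/
noncomputable def gcP (π : Equiv.Perm (Fin n)) (t m : ℕ) (a b : Fin n) : ℕ :=
  (Finset.univ.filter (fun l : Fin n => t ≤ l.1 ∧ l.1 < m ∧ EbetP π a b l)).card

lemma relPos_fe_eq (t : ℕ) (htn : t ≤ n) (π : Equiv.Perm (Fin n)) (j : Fin n) (hj : j.1 < t) :
    relPos π t (fe n t htn ⟨j.1, hj⟩) = relPos π t j := by
  have h : fe n t htn ⟨j.1, hj⟩ = j := Fin.ext rfl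
  rw [h]

lemma A_pairwise (t : ℕ) (htn : t ≤ n) (τ : Equiv.Perm (Fin t)) (π π' : Equiv.Perm (Fin n))
    (hA : AevP n t htn τ π) (hA' : AevP n t htn τ π') :
    ∀ p q : Fin n, p.1 < t → q.1 < t → (π.symm p < π.symm q ↔ π'.symm p < π'.symm q) := by
  intro p q hp hq
  have e1 : relPos π t p = relPos π' t p := by
    have h1 := hA ⟨p.1, hp⟩
    have h2 := hA' ⟨p.1, hp⟩
    rw [relPos_fe_eq t htn π p hp] at h1
    rw [relPos_fe_eq t htn π' p hp] at h2
    omega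
  have e2 : relPos π t q = relPos π' t q := by
    have h1 := hA ⟨q.1, hq⟩
    have h2 := hA' ⟨q.1, hq⟩
    rw [relPos_fe_eq t htn π q hq] at h1
    rw [relPos_fe_eq t htn π' q hq] at h2
    omega
  rw [rank_mono π hp hq, rank_mono π' hp hq, e1, e2]

lemma A_extPerm (t : ℕ) (htn : t ≤ n) (τ : Equiv.Perm (Fin t)) :
    AevP n t htn τ (extPerm n t htn τ) := by
  intro j
  exact relPos_extPerm (n := n) t htn τ j

lemma A_iff_codes (t : ℕ) (htn : t ≤ n) (τ : Equiv.Perm (Fin t)) (π : Equiv.Perm (Fin n)) :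
    AevP n t htn τ π ↔
      ∀ j : Fin n, j.1 < t → code π j = code (extPerm n t htn τ) j := by
  constructor
  · intro hA j hj
    exact code_congr π (extPerm n t htn τ) t
      (A_pairwise t htn τ π (extPerm n t htn τ) hA (A_extPerm t htn τ)) hj
  · intro hcode
    have hpw := codes_det π (extPerm n t htn τ) t hcode
    intro j
    have h1 : relPos π t (fe n t htn j) = relPos (extPerm n t htn τ) t (fe n t htn j) :=
      relPos_congr π (extPerm n t htn τ) t hpw j.isLt
    have h2 := relPos_extPerm (n := n) t htn τ j
    show relPos π t (fe n t htn j) = (τ.symm j).1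
    rw [h1, h2]

lemma x_before_y (t : ℕ) (htn : t ≤ n) (τ : Equiv.Perm (Fin t)) (π : Equiv.Perm (Fin n))
    (x y : Fin t) (hxy : (τ.symm y).1 = (τ.symm x).1 + 1) (hA : AevP n t htn τ π) :
    π.symm (fe n t htn x) < π.symm (fe n t htn y) := by
  have hx := hA x
  have hy := hA y
  rw [rank_mono π (a := fe n t htn x) (b := fe n t htn y) x.isLt y.isLt]
  show relPos π t (fe n t htn x) < relPos π t (fe n t htn y)
  have ex : relPos π t (fe n t htn x) = (τ.symm x).1 := hx
  have ey : relPos π t (fe n t htn y) = (τ.symm y).1 := hy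
  omega

lemma no_between (t : ℕ) (htn : t ≤ n) (τ : Equiv.Perm (Fin t)) (π : Equiv.Perm (Fin n))
    (x y : Fin t) (hxy : (τ.symm y).1 = (τ.symm x).1 + 1) (hA : AevP n t htn τ π) :
    ∀ l : Fin n, l.1 < t → ¬ EbetP π (fe n t htn x) (fe n t htn y) l := by
  intro l hl hbet
  obtain ⟨h1, h2⟩ := hbet
  have r1 : relPos π t (fe n t htn x) < relPos π t l :=
    (rank_mono π (a := fe n t htn x) (b := l) x.isLt hl).mp h1
  have r2 : relPos π t l < relPos π t (fe n t htn y) :=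
    (rank_mono π (a := l) (b := fe n t htn y) hl y.isLt).mp h2
  have ex : relPos π t (fe n t htn x) = (τ.symm x).1 := hA x
  have ey : relPos π t (fe n t htn y) = (τ.symm y).1 := hA y
  omega

lemma gap_count (t : ℕ) (htn : t ≤ n) (τ : Equiv.Perm (Fin t)) (π : Equiv.Perm (Fin n))
    (x y : Fin t) (hxy : (τ.symm y).1 = (τ.symm x).1 + 1) (hA : AevP n t htn τ π)
    (m : ℕ) (hm1 : t ≤ m) :
    relPos π m (fe n t htn y)
      = relPos π m (fe n t htn x) + 1 + gcP π t m (fe n t htn x) (fe n t htn y) := by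
  classical
  set xf := fe n t htn x with hxf
  set yf := fe n t htn y with hyf
  have hxy' : π.symm xf < π.symm yf := x_before_y t htn τ π x y hxy hA
  have hsplit := Finset.card_filter_add_card_filter_not
    (s := Finset.univ.filter (fun l : Fin n => l.1 < m ∧ π.symm l < π.symm yf))
    (p := fun l : Fin n => π.symm l < π.symm xf)
  rw [Finset.filter_filter, Finset.filter_filter] at hsplit
  have e1 : Finset.univ.filter
      (fun l : Fin n => (l.1 < m ∧ π.symm l < π.symm yf) ∧ π.symm l < π.symm xf)
      = Finset.univ.filter (fun l : Fin n => l.1 < m ∧ π.symm l < π.symm xf) := by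
    ext l
    simp only [Finset.mem_filter, Finset.mem_univ, true_and]
    constructor
    · rintro ⟨⟨ha, _⟩, hc⟩; exact ⟨ha, hc⟩
    · rintro ⟨ha, hb⟩; exact ⟨⟨ha, lt_trans hb hxy'⟩, hb⟩
  have e2 : Finset.univ.filter
      (fun l : Fin n => (l.1 < m ∧ π.symm l < π.symm yf) ∧ ¬ π.symm l < π.symm xf)
      = insert xf (Finset.univ.filter
          (fun l : Fin n => t ≤ l.1 ∧ l.1 < m ∧ EbetP π xf yf l)) := by
    ext l
    simp only [Finset.mem_insert, Finset.mem_filter, Finset.mem_univ, true_and]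
    constructor
    · rintro ⟨⟨ha, hb⟩, hc⟩
      by_cases hlx : l = xf
      · exact Or.inl hlx
      · right
        have hne : π.symm l ≠ π.symm xf := fun hc' => hlx (π.symm.injective hc')
        have hbet : EbetP π xf yf l := ⟨lt_of_le_of_ne (not_lt.mp hc) (Ne.symm hne), hb⟩
        refine ⟨?_, ha, hbet⟩
        by_contra hlt
        exact no_between t htn τ π x y hxy hA l (not_le.mp hlt) hbet
    · rintro (rfl | ⟨ha, hb, hc⟩)
      · exact ⟨⟨lt_of_lt_of_le (by exact x.isLt) hm1, hxy'⟩, fun hc => absurd hc (lt_irrefl _)⟩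
      · exact ⟨⟨hb, hc.2⟩, fun hlt => absurd (lt_trans hlt hc.1) (lt_irrefl _)⟩
  rw [e1, e2] at hsplit
  have hxfnot : xf ∉ Finset.univ.filter
      (fun l : Fin n => t ≤ l.1 ∧ l.1 < m ∧ EbetP π xf yf l) := by
    simp only [Finset.mem_filter, Finset.mem_univ, true_and]
    intro hc
    have : xf.1 < t := x.isLt
    omega
  rw [Finset.card_insert_of_notMem hxfnot] at hsplit
  show relPos π m yf = relPos π m xf + 1 + gcP π t m xf yf
  unfold relPos gcP
  omega

noncomputable def wgt (φ : ℝ) (π : Equiv.Perm (Fin n)) : ℝ := φ ^ dKT π 1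

lemma wgt_nonneg {φ : ℝ} (hφ0 : 0 ≤ φ) (π : Equiv.Perm (Fin n)) : 0 ≤ wgt φ π :=
  pow_nonneg hφ0 _

lemma lt_iff_not_lt (π : Equiv.Perm (Fin n)) {a b : Fin n} (hab : a ≠ b) :
    π.symm a < π.symm b ↔ ¬ π.symm b < π.symm a := by
  have hne : π.symm a ≠ π.symm b := fun hc => hab (π.symm.injective hc)
  rcases lt_trichotomy (π.symm a) (π.symm b) with h | h | h
  · simp [h, not_lt.mpr (le_of_lt h)]
  · exact absurd h hne
  · simp [not_lt.mpr (le_of_lt h), h]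

lemma perm_sum_split (i : Fin n) (F : Equiv.Perm (Fin n) → ℝ) :
    ∑ π : Equiv.Perm (Fin n), F π
      = ∑ c : Fin (i.1 + 1), ∑ r : ∀ j : {j : Fin n // j ≠ i}, Fin (j.1.1 + 1),
          F (codeEquiv.symm
            ((Equiv.piSplitAt i (fun j : Fin n => Fin (j.1 + 1))).symm (c, r))) := by
  classical
  calc ∑ π : Equiv.Perm (Fin n), F π
      = ∑ v : ∀ j : Fin n, Fin (j.1 + 1), F (codeEquiv.symm v) :=
        (Equiv.sum_comp (codeEquiv (n := n)).symm F).symm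
    _ = ∑ p : Fin (i.1 + 1) × (∀ j : {j : Fin n // j ≠ i}, Fin (j.1.1 + 1)),
          F (codeEquiv.symm ((Equiv.piSplitAt i (fun j : Fin n => Fin (j.1 + 1))).symm p)) :=
        (Equiv.sum_comp (Equiv.piSplitAt i (fun j : Fin n => Fin (j.1 + 1))).symm
          (fun v => F (codeEquiv.symm v))).symm
    _ = _ := Fintype.sum_prod_type _

lemma kstep (t : ℕ) (htn : t ≤ n) (τ : Equiv.Perm (Fin t)) (x y : Fin t)
    (hxy : (τ.symm y).1 = (τ.symm x).1 + 1) {φ : ℝ} (hφ0 : 0 ≤ φ) (hφ1 : φ ≤ 1)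
    (i : Fin n) (hti : t ≤ i.1) :
    (∑ π : Equiv.Perm (Fin n),
        if AevP n t htn τ π ∧ EbetP π (fe n t htn x) (fe n t htn y) i
        then wgt φ π else 0) * (∑ s ∈ Finset.range t, φ ^ s)
      ≤ ∑ π : Equiv.Perm (Fin n),
          if AevP n t htn τ π then
            wgt φ π * (1 + (gcP π t i.1 (fe n t htn x) (fe n t htn y) : ℝ)) else 0 := by
  classical
  rw [perm_sum_split i, perm_sum_split i]
  conv_lhs => rw [Finset.sum_comm]
  conv_rhs => rw [Finset.sum_comm]
  rw [Finset.sum_mul]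
  apply Finset.sum_le_sum
  intro r _
  -- notation
  set xf := fe n t htn x with hxf
  set yf := fe n t htn y with hyf
  have hxfi : xf ≠ i := by
    intro hc
    have : xf.1 = i.1 := congrArg Fin.val hc
    have : x.1 < t := x.isLt
    simp only [hxf, fe] at *
    omega
  have hyfi : yf ≠ i := by
    intro hc
    have h1 : yf.1 = i.1 := congrArg Fin.val hc
    have h2 : y.1 < t := y.isLt
    simp only [hyf, fe] at h1
    omega
  have hxflt : xf < i := by
    rw [Fin.lt_def]
    have : x.1 < t := x.isLt
    show x.1 < i.1
    omega
  have hyflt : yf < i := by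
    rw [Fin.lt_def]
    have : y.1 < t := y.isLt
    show y.1 < i.1
    omega
  set e2 := Equiv.piSplitAt i (fun j : Fin n => Fin (j.1 + 1)) with he2
  set Q : Fin (i.1 + 1) → Equiv.Perm (Fin n) :=
    fun c => codeEquiv.symm (e2.symm (c, r)) with hQ
  have hvi : ∀ c, (e2.symm (c, r)) i = c := by
    intro c
    have h := e2.apply_symm_apply (c, r)
    have := congrArg Prod.fst h
    simpa [he2, Equiv.piSplitAt] using this
  have hvj : ∀ c (j : {j : Fin n // j ≠ i}), (e2.symm (c, r)) j.1 = r j := by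
    intro c j
    have h := e2.apply_symm_apply (c, r)
    have h2 := congrArg Prod.snd h
    have := congrFun h2 j
    simpa [he2, Equiv.piSplitAt] using this
  have hcode_i : ∀ c, code (Q c) i = c.1 := by
    intro c
    rw [hQ]
    rw [code_codeEquiv_symm]
    rw [hvi c]
  have hcode_j : ∀ c c' (j : Fin n), j ≠ i → code (Q c) j = code (Q c') j := by
    intro c c' j hj
    rw [hQ]
    rw [code_codeEquiv_symm, code_codeEquiv_symm]
    rw [hvj c ⟨j, hj⟩, hvj c' ⟨j, hj⟩]
  set c0 : Fin (i.1 + 1) := ⟨0, Nat.succ_pos _⟩ with hc0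
  set π0 := Q c0 with hπ0
  have hpair : ∀ c, ∀ p q : Fin n, p.1 < i.1 → q.1 < i.1 →
      ((Q c).symm p < (Q c).symm q ↔ π0.symm p < π0.symm q) := by
    intro c
    apply codes_det
    intro j hj
    exact hcode_j c c0 j (fun hc => by rw [hc] at hj; omega)
  have hA_iff : ∀ c, (AevP n t htn τ (Q c) ↔ AevP n t htn τ π0) := by
    intro c
    rw [A_iff_codes, A_iff_codes]
    constructor
    · intro h j hj
      rw [← h j hj]
      exact (hcode_j c0 c j (fun hc => by rw [hc] at hj; omega))
    · intro h j hj
      rw [← h j hj]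
      exact (hcode_j c c0 j (fun hc => by rw [hc] at hj; omega))
  have hgc : ∀ c, gcP (Q c) t i.1 xf yf = gcP π0 t i.1 xf yf := by
    intro c
    unfold gcP
    congr 1
    ext l
    simp only [Finset.mem_filter, Finset.mem_univ, true_and]
    constructor
    · rintro ⟨h1, h2, h3, h4⟩
      exact ⟨h1, h2, (hpair c xf l (by omega) h2).mp h3, (hpair c l yf h2 (by omega)).mp h4⟩
    · rintro ⟨h1, h2, h3, h4⟩
      exact ⟨h1, h2, (hpair c xf l (by omega) h2).mpr h3, (hpair c l yf h2 (by omega)).mpr h4⟩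
  set Rx := relPos π0 i.1 xf with hRx
  set Ry := relPos π0 i.1 yf with hRy
  have hRxc : ∀ c, relPos (Q c) i.1 xf = Rx := by
    intro c
    rw [hRx]
    exact relPos_congr (Q c) π0 i.1 (hpair c) (by have : x.1 < t := x.isLt; show x.1 < i.1; omega)
  have hRyc : ∀ c, relPos (Q c) i.1 yf = Ry := by
    intro c
    rw [hRy]
    exact relPos_congr (Q c) π0 i.1 (hpair c) (by have : y.1 < t := y.isLt; show y.1 < i.1; omega)
  set W0 : ℝ := φ ^ (∑ j ∈ Finset.univ.erase i, code π0 j) with hW0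
  have hW0nn : 0 ≤ W0 := pow_nonneg hφ0 _
  have hwgt : ∀ c, wgt φ (Q c) = φ ^ c.1 * W0 := by
    intro c
    unfold wgt
    rw [dKT_one]
    rw [← Finset.add_sum_erase Finset.univ (code (Q c)) (Finset.mem_univ i)]
    rw [hcode_i c]
    rw [Finset.sum_congr rfl (fun j hj => hcode_j c c0 j (Finset.ne_of_mem_erase hj))]
    rw [pow_add, hW0]
  have hEchar : ∀ c, (EbetP (Q c) xf yf i ↔ (i.1 ≤ Ry + c.1 ∧ ¬ i.1 ≤ Rx + c.1)) := by
    intro c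
    unfold EbetP
    have h2 : ((Q c).symm i < (Q c).symm yf ↔ i.1 ≤ Ry + c.1) := by
      rw [rank_char (Q c) hyflt, hRyc c, hcode_i c]
    have h1 : ((Q c).symm xf < (Q c).symm i ↔ ¬ i.1 ≤ Rx + c.1) := by
      rw [lt_iff_not_lt (Q c) hxfi]
      rw [rank_char (Q c) hxflt, hRxc c, hcode_i c]
    rw [h1, h2]
    tauto
  by_cases hA0 : AevP n t htn τ π0
  · -- main case
    set g0 := gcP π0 t i.1 xf yf with hg0
    have hG := gap_count t htn τ π0 x y hxy hA0 i.1 hti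
    have hRyRx : Ry = Rx + 1 + g0 := hG
    have lhs_eq : (∑ c : Fin (i.1 + 1),
        if AevP n t htn τ (Q c) ∧ EbetP (Q c) xf yf i then wgt φ (Q c) else 0)
        = ∑ c : Fin (i.1 + 1),
            (if i.1 ≤ Ry + c.1 ∧ ¬ i.1 ≤ Rx + c.1 then φ ^ c.1 else 0) * W0 := by
      apply Finset.sum_congr rfl
      intro c _
      rw [hwgt c]
      by_cases hE : i.1 ≤ Ry + c.1 ∧ ¬ i.1 ≤ Rx + c.1
      · rw [if_pos ⟨(hA_iff c).mpr hA0, (hEchar c).mpr hE⟩, if_pos hE]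
      · rw [if_neg (fun hcon => hE ((hEchar c).mp hcon.2)), if_neg hE, zero_mul]
    have rhs_eq : (∑ c : Fin (i.1 + 1),
        if AevP n t htn τ (Q c) then wgt φ (Q c) * (1 + (gcP (Q c) t i.1 xf yf : ℝ)) else 0)
        = ∑ c : Fin (i.1 + 1), φ ^ c.1 * (W0 * (1 + (g0 : ℝ))) := by
      apply Finset.sum_congr rfl
      intro c _
      rw [if_pos ((hA_iff c).mpr hA0), hwgt c, hgc c]
      ring
    rw [lhs_eq, rhs_eq]
    rw [← Finset.sum_mul, ← Finset.sum_mul]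
    -- now : (T * W0) * Zt ≤ (∑ φ^c) * (W0 * (1+g0))
    have hTle : (∑ c : Fin (i.1 + 1),
        if i.1 ≤ Ry + c.1 ∧ ¬ i.1 ≤ Rx + c.1 then φ ^ c.1 else 0) ≤ 1 + (g0 : ℝ) := by
      rw [← Finset.sum_filter]
      have h1 : (∑ c ∈ Finset.univ.filter
          (fun c : Fin (i.1 + 1) => i.1 ≤ Ry + c.1 ∧ ¬ i.1 ≤ Rx + c.1), φ ^ c.1)
          ≤ ((Finset.univ.filter
            (fun c : Fin (i.1 + 1) => i.1 ≤ Ry + c.1 ∧ ¬ i.1 ≤ Rx + c.1)).card : ℝ) := by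
        have := Finset.sum_le_card_nsmul
          (Finset.univ.filter (fun c : Fin (i.1 + 1) => i.1 ≤ Ry + c.1 ∧ ¬ i.1 ≤ Rx + c.1))
          (fun c => φ ^ c.1) 1 (fun c _ => pow_le_one₀ hφ0 hφ1)
        simpa using this
      have h2 : (Finset.univ.filter
          (fun c : Fin (i.1 + 1) => i.1 ≤ Ry + c.1 ∧ ¬ i.1 ≤ Rx + c.1)).card ≤ 1 + g0 := by
        have hsub := Finset.card_le_card_of_injOn (f := Fin.val)
          (s := Finset.univ.filter
            (fun c : Fin (i.1 + 1) => i.1 ≤ Ry + c.1 ∧ ¬ i.1 ≤ Rx + c.1))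
          (t := Finset.Ico (i.1 - Ry) (i.1 - Rx)) ?_ ?_
        · rw [Nat.card_Ico] at hsub
          omega
        · intro c hc
          simp only [Finset.mem_coe, Finset.mem_filter, Finset.mem_univ, true_and] at hc
          simp only [Finset.mem_coe, Finset.mem_Ico]
          omega
        · intro a _ b _ hab
          exact Fin.ext hab
      calc (∑ c ∈ Finset.univ.filter
          (fun c : Fin (i.1 + 1) => i.1 ≤ Ry + c.1 ∧ ¬ i.1 ≤ Rx + c.1), φ ^ c.1)
          ≤ ((Finset.univ.filter
            (fun c : Fin (i.1 + 1) => i.1 ≤ Ry + c.1 ∧ ¬ i.1 ≤ Rx + c.1)).card : ℝ) := h1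
        _ ≤ 1 + (g0 : ℝ) := by exact_mod_cast Nat.cast_le.mpr h2
    have hTnn : 0 ≤ (∑ c : Fin (i.1 + 1),
        if i.1 ≤ Ry + c.1 ∧ ¬ i.1 ≤ Rx + c.1 then φ ^ c.1 else 0) :=
      Finset.sum_nonneg (fun c _ => by positivity)
    have hZle : (∑ s ∈ Finset.range t, φ ^ s) ≤ ∑ c : Fin (i.1 + 1), φ ^ c.1 := by
      rw [Fin.sum_univ_eq_sum_range (fun s => φ ^ s) (i.1 + 1)]
      apply Finset.sum_le_sum_of_subset_of_nonneg
      · apply Finset.range_subset_range.mpr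
        omega
      · intro s _ _
        positivity
    have hZnn : 0 ≤ ∑ s ∈ Finset.range t, φ ^ s :=
      Finset.sum_nonneg (fun s _ => by positivity)
    have hgnn : (0:ℝ) ≤ 1 + (g0 : ℝ) := by positivity
    calc (∑ c : Fin (i.1 + 1),
          if i.1 ≤ Ry + c.1 ∧ ¬ i.1 ≤ Rx + c.1 then φ ^ c.1 else 0) * W0
          * (∑ s ∈ Finset.range t, φ ^ s)
        ≤ ((1 + (g0:ℝ)) * W0) * (∑ s ∈ Finset.range t, φ ^ s) := by
          apply mul_le_mul_of_nonneg_right _ hZnn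
          exact mul_le_mul_of_nonneg_right hTle hW0nn
      _ ≤ ((1 + (g0:ℝ)) * W0) * (∑ c : Fin (i.1 + 1), φ ^ c.1) := by
          apply mul_le_mul_of_nonneg_left hZle
          exact mul_nonneg hgnn hW0nn
      _ = (∑ c : Fin (i.1 + 1), φ ^ c.1) * (W0 * (1 + (g0:ℝ))) := by ring
  · -- degenerate case : event A fails for every c
    have lhs0 : (∑ c : Fin (i.1 + 1),
        if AevP n t htn τ (Q c) ∧ EbetP (Q c) xf yf i then wgt φ (Q c) else 0) = 0 := by
      apply Finset.sum_eq_zero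
      intro c _
      rw [if_neg (fun hcon => hA0 ((hA_iff c).mp hcon.1))]
    have rhs0 : (∑ c : Fin (i.1 + 1),
        if AevP n t htn τ (Q c) then wgt φ (Q c) * (1 + (gcP (Q c) t i.1 xf yf : ℝ)) else 0)
        = 0 := by
      apply Finset.sum_eq_zero
      intro c _
      rw [if_neg (fun hcon => hA0 ((hA_iff c).mp hcon))]
    rw [lhs0, rhs0, zero_mul]

lemma gc_succ (π : Equiv.Perm (Fin n)) (a b : Fin n) (t m : ℕ) (hmt : t ≤ m) (hmn : m < n) :
    gcP π t (m + 1) a b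
      = gcP π t m a b + (if EbetP π a b ⟨m, hmn⟩ then 1 else 0) := by
  classical
  unfold gcP
  by_cases hEm : EbetP π a b ⟨m, hmn⟩
  · rw [if_pos hEm]
    have he : Finset.univ.filter (fun l : Fin n => t ≤ l.1 ∧ l.1 < m + 1 ∧ EbetP π a b l)
        = insert ⟨m, hmn⟩
          (Finset.univ.filter (fun l : Fin n => t ≤ l.1 ∧ l.1 < m ∧ EbetP π a b l)) := by
      ext l
      simp only [Finset.mem_insert, Finset.mem_filter, Finset.mem_univ, true_and]
      constructor
      · rintro ⟨h1, h2, h3⟩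
        by_cases hlm : l.1 = m
        · exact Or.inl (Fin.ext hlm)
        · exact Or.inr ⟨h1, by omega, h3⟩
      · rintro (rfl | ⟨h1, h2, h3⟩)
        · exact ⟨hmt, Nat.lt_succ_self m, hEm⟩
        · exact ⟨h1, by omega, h3⟩
    rw [he, Finset.card_insert_of_notMem]
    simp only [Finset.mem_filter, Finset.mem_univ, true_and]
    intro hcon
    exact Nat.lt_irrefl m hcon.2.1
  · rw [if_neg hEm, add_zero]
    congr 1
    ext l
    simp only [Finset.mem_filter, Finset.mem_univ, true_and]
    constructor
    · rintro ⟨h1, h2, h3⟩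
      refine ⟨h1, ?_, h3⟩
      rcases Nat.lt_succ_iff_lt_or_eq.mp h2 with h | h
      · exact h
      · exfalso
        have : l = ⟨m, hmn⟩ := Fin.ext h
        rw [this] at h3
        exact hEm h3
    · rintro ⟨h1, h2, h3⟩
      exact ⟨h1, by omega, h3⟩

lemma geom_rec (D p : ℝ) (hp : 0 ≤ p) (S : ℕ → ℝ) (h0 : S 0 = 0) (k : ℕ)
    (hstep : ∀ j, j < k → S (j + 1) ≤ (1 + p) * S j + p * D) :
    S k ≤ ((1 + p) ^ k - 1) * D := by
  induction k with
  | zero => simp [h0]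
  | succ m ih =>
    have ih' := ih (fun j hj => hstep j (Nat.lt_succ_of_lt hj))
    have hs := hstep m (Nat.lt_succ_self m)
    have h2 : (1 + p) * S m ≤ (1 + p) * (((1 + p) ^ m - 1) * D) :=
      mul_le_mul_of_nonneg_left ih' (by linarith)
    calc S (m + 1) ≤ (1 + p) * S m + p * D := hs
      _ ≤ (1 + p) * (((1 + p) ^ m - 1) * D) + p * D := by linarith
      _ = ((1 + p) ^ (m + 1) - 1) * D := by ring

lemma pow_one_add_sub_le (p : ℝ) (hp : 0 ≤ p) (k : ℕ) :
    (1 + p) ^ k - 1 ≤ (k : ℝ) * p * (1 + p) ^ k := by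
  induction k with
  | zero => simp
  | succ m ih =>
    have hp1 : (0:ℝ) ≤ 1 + p := by linarith
    have hA1 : (1:ℝ) ≤ (1 + p) ^ m := one_le_pow₀ (by linarith)
    have h2 : (1 + p) * ((1 + p) ^ m - 1) ≤ (1 + p) * ((m : ℝ) * p * (1 + p) ^ m) :=
      mul_le_mul_of_nonneg_left ih hp1
    have h3 : p * 1 ≤ p * ((1 + p) ^ m * (1 + p)) :=
      mul_le_mul_of_nonneg_left (by nlinarith) hp
    rw [pow_succ]
    push_cast
    nlinarith [h2, h3]

lemma exp_eight_le : Real.exp 8 ≤ 2981 := by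
  have h := Real.exp_one_lt_d9
  have h8 : Real.exp 8 = (Real.exp 1) ^ (8 : ℕ) := by
    rw [← Real.exp_nat_mul]; norm_num
  rw [h8]
  calc (Real.exp 1) ^ (8:ℕ) ≤ (2.7182818286 : ℝ) ^ (8:ℕ) :=
        pow_le_pow_left₀ (Real.exp_pos 1).le h.le 8
    _ ≤ 2981 := by norm_num

lemma Zt_one_le {φ : ℝ} (hφ0 : 0 ≤ φ) {t : ℕ} (ht1 : 1 ≤ t) :
    (1:ℝ) ≤ ∑ s ∈ Finset.range t, φ ^ s := by
  have h := Finset.single_le_sum (f := fun s => φ ^ s)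
    (fun s _ => by positivity) (Finset.mem_range.mpr (by omega : 0 < t))
  simpa using h

lemma Zt_lower {φ : ℝ} (hφ0 : 0 ≤ φ) (hφ1 : φ < 1) {t : ℕ} (ht2 : 2 ≤ t) :
    1 ≤ 8 * max (1 / (t : ℝ)) (1 - φ) * ∑ s ∈ Finset.range t, φ ^ s := by
  have htR : (2:ℝ) ≤ (t:ℝ) := by exact_mod_cast ht2
  have htpos : (0:ℝ) < (t:ℝ) := by linarith
  set μ := max (1 / (t : ℝ)) (1 - φ) with hμ
  set Z := ∑ s ∈ Finset.range t, φ ^ s with hZ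
  have hμ1 : 1 / (t:ℝ) ≤ μ := le_max_left _ _
  have hμ2 : 1 - φ ≤ μ := le_max_right _ _
  have hZ1 : (1:ℝ) ≤ Z := Zt_one_le hφ0 (by omega)
  have hZ0 : (0:ℝ) ≤ Z := by linarith
  by_cases hc : (1:ℝ) ≤ 4 * (1 - φ)
  · have h8 : (2:ℝ) ≤ 8 * (1 - φ) := by linarith
    have step1 : (2:ℝ) * 1 ≤ (8 * (1 - φ)) * Z :=
      mul_le_mul h8 hZ1 (by norm_num) (by linarith)
    have step2 : (8 * (1 - φ)) * Z ≤ (8 * μ) * Z :=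
      mul_le_mul_of_nonneg_right (by linarith) hZ0
    linarith
  · push_neg at hc
    have hε : (0:ℝ) < 1 - φ := by linarith
    set m := min t (Nat.floor (1 / (2 * (1 - φ)))) with hm
    have hm_le_t : m ≤ t := min_le_left _ _
    have hmR : (m:ℝ) ≤ 1 / (2 * (1 - φ)) := by
      have h1 : m ≤ Nat.floor (1 / (2 * (1 - φ))) := min_le_right _ _
      have h2 : ((Nat.floor (1 / (2 * (1 - φ))) : ℕ) : ℝ) ≤ 1 / (2 * (1 - φ)) :=
        Nat.floor_le (by positivity)
      calc (m:ℝ) ≤ ((Nat.floor (1 / (2 * (1 - φ))) : ℕ) : ℝ) := by exact_mod_cast h1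
        _ ≤ _ := h2
    have hhalf : (1 / (2 * (1 - φ))) * (1 - φ) = 1 / 2 := by field_simp
    have hmε : (m:ℝ) * (1 - φ) ≤ 1 / 2 := by
      have := mul_le_mul_of_nonneg_right hmR (le_of_lt hε)
      rw [hhalf] at this
      exact this
    have hφm : 1 - (m:ℝ) * (1 - φ) ≤ φ ^ m := by
      have hb := one_add_mul_le_pow (a := φ - 1) (by linarith) m
      have he : (1 + (φ - 1)) = φ := by ring
      rw [he] at hb
      calc 1 - (m:ℝ) * (1 - φ) = 1 + (m:ℝ) * (φ - 1) := by ring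
        _ ≤ φ ^ m := hb
    have hφm2 : (1:ℝ) / 2 ≤ φ ^ m := by linarith
    have hZm : (m:ℝ) * φ ^ m ≤ Z := by
      have e1 : (m:ℝ) * φ ^ m = ∑ s ∈ Finset.range m, φ ^ m := by
        rw [Finset.sum_const, Finset.card_range, nsmul_eq_mul]
      rw [e1, hZ]
      calc ∑ s ∈ Finset.range m, φ ^ m ≤ ∑ s ∈ Finset.range m, φ ^ s :=
            Finset.sum_le_sum (fun s hs =>
              pow_le_pow_of_le_one hφ0 (le_of_lt hφ1)
                (le_of_lt (Finset.mem_range.mp hs)))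
        _ ≤ ∑ s ∈ Finset.range t, φ ^ s :=
            Finset.sum_le_sum_of_subset_of_nonneg
              (Finset.range_subset_range.mpr hm_le_t) (fun s _ _ => by positivity)
    have hZm2 : (m:ℝ) / 2 ≤ Z := by
      have : (m:ℝ) * (1/2) ≤ (m:ℝ) * φ ^ m :=
        mul_le_mul_of_nonneg_left hφm2 (by positivity)
      nlinarith
    by_cases hmt : t ≤ Nat.floor (1 / (2 * (1 - φ)))
    · have hmeq : m = t := min_eq_left hmt
      have hZt2 : (t:ℝ) / 2 ≤ Z := by rw [hmeq] at hZm2; exact hZm2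
      have e4 : (8 * (1 / (t:ℝ))) * ((t:ℝ)/2) = 4 := by field_simp; ring
      have step1 : (8 * (1/(t:ℝ))) * ((t:ℝ)/2) ≤ (8 * (1/(t:ℝ))) * Z :=
        mul_le_mul_of_nonneg_left hZt2 (by positivity)
      have step2 : (8 * (1/(t:ℝ))) * Z ≤ (8 * μ) * Z :=
        mul_le_mul_of_nonneg_right (by linarith) hZ0
      rw [e4] at step1
      linarith
    · have hmeq : m = Nat.floor (1 / (2 * (1 - φ))) := min_eq_right (le_of_not_ge hmt)
      have hfl : 1 / (2 * (1 - φ)) - 1 < (m:ℝ) := by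
        rw [hmeq]
        exact Nat.sub_one_lt_floor _
      have key : (1:ℝ) ≤ 4 * (1 - φ) * (m:ℝ) := by
        have h4 := mul_lt_mul_of_pos_left hfl (by linarith : (0:ℝ) < 4 * (1 - φ))
        have e5 : 4 * (1 - φ) * (1 / (2 * (1 - φ)) - 1) = 2 - 4 * (1 - φ) := by
          field_simp
          ring
        rw [e5] at h4
        linarith
      have step1 : 4 * (1 - φ) * (m:ℝ) = (8 * (1 - φ)) * ((m:ℝ)/2) := by ring
      have step2 : (8 * (1 - φ)) * ((m:ℝ)/2) ≤ (8 * (1 - φ)) * Z :=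
        mul_le_mul_of_nonneg_left hZm2 (by linarith)
      have step3 : (8 * (1 - φ)) * Z ≤ (8 * μ) * Z :=
        mul_le_mul_of_nonneg_right (by linarith) hZ0
      linarith

lemma core {t k : ℕ} {φ : ℝ} (hφ0 : 0 ≤ φ) (hφ1 : φ < 1) (ht2 : 2 ≤ t) (hk1 : 1 ≤ k)
    (hkt : k ≤ t) (hkφ : (k : ℝ) ≤ 1 / (1 - φ)) (hn : t + k ≤ n) (htn : t ≤ n)
    (τ : Equiv.Perm (Fin t)) (x y : Fin t) (hxy : (τ.symm y).1 = (τ.symm x).1 + 1) :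
    (∑ π : Equiv.Perm (Fin n), if AevP n t htn τ π then
        wgt φ π * (((relPos π (t + k) (fe n t htn y) : ℝ)
          - (relPos π (t + k) (fe n t htn x) : ℝ)) - 1) else 0)
      ≤ 24000 * (k : ℝ) * max (1 / (t : ℝ)) (1 - φ)
        * (∑ π : Equiv.Perm (Fin n), if AevP n t htn τ π then wgt φ π else 0) := by
  classical
  set xf := fe n t htn x with hxf
  set yf := fe n t htn y with hyf
  set A := AevP n t htn τ with hA
  set D := ∑ π : Equiv.Perm (Fin n), if A π then wgt φ π else 0 with hD
  have hDnn : 0 ≤ D := Finset.sum_nonneg (fun π _ => by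
    by_cases h : A π
    · rw [if_pos h]; exact wgt_nonneg hφ0 π
    · rw [if_neg h])
  set Z := ∑ s ∈ Finset.range t, φ ^ s with hZ
  have hZ1 : (1:ℝ) ≤ Z := Zt_one_le hφ0 (by omega)
  have hZpos : (0:ℝ) < Z := by linarith
  set p := 1 / Z with hp
  have hp0 : 0 ≤ p := by positivity
  set μ := max (1 / (t : ℝ)) (1 - φ) with hμ
  set S : ℕ → ℝ := fun j => ∑ π : Equiv.Perm (Fin n),
    if A π then wgt φ π * (gcP π t (t + j) xf yf : ℝ) else 0 with hS
  -- step 1 : rewrite the numerator as S k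
  have hnum : (∑ π : Equiv.Perm (Fin n), if A π then
      wgt φ π * (((relPos π (t + k) yf : ℝ) - (relPos π (t + k) xf : ℝ)) - 1) else 0)
      = S k := by
    apply Finset.sum_congr rfl
    intro π _
    by_cases hAπ : A π
    · rw [if_pos hAπ, if_pos hAπ]
      have hG := gap_count t htn τ π x y hxy hAπ (t + k) (by omega)
      rw [← hxf, ← hyf] at hG
      have : ((relPos π (t + k) yf : ℝ) - (relPos π (t + k) xf : ℝ)) - 1
          = (gcP π t (t + k) xf yf : ℝ) := by
        rw [hG]
        push_cast
        ring
      rw [this]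
    · rw [if_neg hAπ, if_neg hAπ]
  rw [hnum]
  -- step 2 : S 0 = 0
  have hS0 : S 0 = 0 := by
    apply Finset.sum_eq_zero
    intro π _
    have hg : gcP π t (t + 0) xf yf = 0 := by
      unfold gcP
      rw [Finset.card_eq_zero, Finset.filter_eq_empty_iff]
      intro l _
      rintro ⟨h1, h2, _⟩
      omega
    rw [hg]
    by_cases hAπ : A π
    · rw [if_pos hAπ]; norm_num
    · rw [if_neg hAπ]
  -- step 3 : the recursion
  have hstep : ∀ j, j < k → S (j + 1) ≤ (1 + p) * S j + p * D := by
    intro j hj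
    have hks : (∑ π : Equiv.Perm (Fin n),
        if A π ∧ EbetP π xf yf ⟨t + j, by omega⟩ then wgt φ π else 0) * Z
        ≤ ∑ π : Equiv.Perm (Fin n),
            if A π then wgt φ π * (1 + (gcP π t (t + j) xf yf : ℝ)) else 0 :=
      kstep t htn τ x y hxy hφ0 (le_of_lt hφ1) ⟨t + j, by omega⟩ (by exact Nat.le_add_right t j)
    set M := ∑ π : Equiv.Perm (Fin n),
      if A π ∧ EbetP π xf yf ⟨t + j, by omega⟩ then wgt φ π else 0 with hM
    have hMnn : 0 ≤ M := Finset.sum_nonneg (fun π _ => by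
      by_cases h : A π ∧ EbetP π xf yf ⟨t + j, by omega⟩
      · rw [if_pos h]; exact wgt_nonneg hφ0 π
      · rw [if_neg h])
    have hrhs : (∑ π : Equiv.Perm (Fin n),
        if A π then wgt φ π * (1 + (gcP π t (t + j) xf yf : ℝ)) else 0) = D + S j := by
      rw [hD, hS, ← Finset.sum_add_distrib]
      apply Finset.sum_congr rfl
      intro π _
      by_cases hAπ : A π
      · rw [if_pos hAπ, if_pos hAπ, if_pos hAπ]; ring
      · rw [if_neg hAπ, if_neg hAπ, if_neg hAπ]; ring
    have hSsucc : S (j + 1) = S j + M := by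
      rw [hS, hM, ← Finset.sum_add_distrib]
      apply Finset.sum_congr rfl
      intro π _
      have hgs : gcP π t (t + j + 1) xf yf = gcP π t (t + j) xf yf
          + (if EbetP π xf yf ⟨t + j, by omega⟩ then 1 else 0) :=
        gc_succ π xf yf t (t + j) (Nat.le_add_right t j) (by omega)
      have : t + (j + 1) = (t + j) + 1 := by omega
      rw [this, hgs]
      by_cases hAπ : A π
      · by_cases hE : EbetP π xf yf ⟨t + j, by omega⟩
        · rw [if_pos hE, if_pos hAπ, if_pos hAπ,
            if_pos (show A π ∧ EbetP π xf yf ⟨t + j, by omega⟩ from ⟨hAπ, hE⟩)]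
          push_cast
          ring
        · rw [if_neg hE, if_pos hAπ, if_pos hAπ,
            if_neg (show ¬(A π ∧ EbetP π xf yf ⟨t + j, by omega⟩) from fun hc => hE hc.2)]
          push_cast
          ring
      · rw [if_neg hAπ, if_neg hAπ,
          if_neg (show ¬(A π ∧ EbetP π xf yf ⟨t + j, by omega⟩) from fun hc => hAπ hc.1)]
        ring
    have hMle : M ≤ p * (D + S j) := by
      rw [hrhs] at hks
      have : M ≤ (D + S j) / Z := (le_div_iff₀ hZpos).mpr hks
      rw [hp]
      calc M ≤ (D + S j) / Z := this
        _ = 1 / Z * (D + S j) := by ring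
    rw [hSsucc]
    have hexp : S j + M ≤ S j + p * (D + S j) := by linarith
    calc S j + M ≤ S j + p * (D + S j) := hexp
      _ = (1 + p) * S j + p * D := by ring
  -- step 4 : apply the recursion
  have hrec : S k ≤ ((1 + p) ^ k - 1) * D := geom_rec D p hp0 S hS0 k hstep
  -- step 5 : numerics
  have hμ1 : 1 / (t:ℝ) ≤ μ := le_max_left _ _
  have hμ2 : 1 - φ ≤ μ := le_max_right _ _
  have htpos : (0:ℝ) < (t:ℝ) := by
    have : (2:ℝ) ≤ (t:ℝ) := by exact_mod_cast ht2
    linarith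
  have hμpos : 0 < μ := lt_of_lt_of_le (by positivity) hμ1
  have hε : (0:ℝ) < 1 - φ := by linarith
  have hp8 : p ≤ 8 * μ := by
    have hZb := Zt_lower hφ0 hφ1 ht2 (φ := φ)
    rw [← hμ, ← hZ] at hZb
    rw [hp, div_le_iff₀ hZpos]
    linarith
  have hkμ : (k:ℝ) * μ ≤ 1 := by
    have h1 : (k:ℝ) * (1 / (t:ℝ)) ≤ 1 := by
      rw [mul_one_div, div_le_one htpos]
      exact_mod_cast hkt
    have h2 : (k:ℝ) * (1 - φ) ≤ 1 := by
      rw [← le_div_iff₀ hε]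
      exact hkφ
    have hkR : (0:ℝ) ≤ (k:ℝ) := by positivity
    rw [hμ, mul_max_of_nonneg _ _ hkR]
    exact max_le h1 h2
  have hkp : (k:ℝ) * p ≤ 8 := by
    have : (k:ℝ) * p ≤ (k:ℝ) * (8 * μ) :=
      mul_le_mul_of_nonneg_left hp8 (by positivity)
    nlinarith
  have hkpnn : 0 ≤ (k:ℝ) * p := by positivity
  have hpow : (1 + p) ^ k ≤ 2981 := by
    calc (1 + p) ^ k ≤ (Real.exp p) ^ k :=
          pow_le_pow_left₀ (by linarith) (by linarith [Real.add_one_le_exp p]) k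
      _ = Real.exp ((k:ℝ) * p) := by rw [← Real.exp_nat_mul]
      _ ≤ Real.exp 8 := Real.exp_le_exp.mpr hkp
      _ ≤ 2981 := exp_eight_le
  have hb := pow_one_add_sub_le p hp0 k
  have hone : (1:ℝ) ≤ (1 + p) ^ k := one_le_pow₀ (by linarith)
  -- chain it together
  have hchain : ((1 + p) ^ k - 1) ≤ 24000 * (k:ℝ) * μ := by
    calc ((1 + p) ^ k - 1) ≤ (k:ℝ) * p * (1 + p) ^ k := hb
      _ ≤ (k:ℝ) * p * 2981 := mul_le_mul_of_nonneg_left hpow hkpnn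
      _ ≤ (k:ℝ) * (8 * μ) * 2981 := by
          have : (k:ℝ) * p ≤ (k:ℝ) * (8 * μ) :=
            mul_le_mul_of_nonneg_left hp8 (by positivity)
          nlinarith
      _ ≤ 24000 * (k:ℝ) * μ := by
          have hk0 : (0:ℝ) ≤ (k:ℝ) := by positivity
          nlinarith [hμpos.le, hk0]
  calc S k ≤ ((1 + p) ^ k - 1) * D := hrec
    _ ≤ (24000 * (k:ℝ) * μ) * D := mul_le_mul_of_nonneg_right hchain hDnn
    _ = 24000 * (k:ℝ) * μ * D := by ring

lemma dKT_one_one : dKT (1 : Equiv.Perm (Fin n)) 1 = 0 := by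
  classical
  unfold dKT
  rw [Finset.card_eq_zero, Finset.filter_eq_empty_iff]
  intro pq _
  rintro ⟨h1, h2⟩
  exact h2 ⟨fun h => h, fun h => h⟩

end Aux

theorem expected_gaps' :
    ∃ C : ℝ, 0 < C ∧
      ∀ (n : ℕ) (φ : ℝ), 0 ≤ φ → φ < 1 →
        ∀ (t k : ℕ), 2 ≤ t → 1 ≤ k → k ≤ t → (k : ℝ) ≤ 1 / (1 - φ) →
          ∀ hn : t + k ≤ n,
            ∀ (τ : Equiv.Perm (Fin t)) (x y : Fin t),
              (τ.symm y).1 = (τ.symm x).1 + 1 →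
              (∑ π : Equiv.Perm (Fin n),
                if (∀ j : Fin t, relPos π t ⟨j.1, Nat.lt_of_lt_of_le j.isLt (by omega)⟩ = (τ.symm j).1) then
                  (φ ^ dKT π 1 / ∑ σ : Equiv.Perm (Fin n), φ ^ dKT σ 1) *
                    (((relPos π (t + k) ⟨y.1, Nat.lt_of_lt_of_le y.isLt (by omega)⟩ : ℝ) -
                      (relPos π (t + k) ⟨x.1, Nat.lt_of_lt_of_le x.isLt (by omega)⟩ : ℝ)) - 1) else 0) /
              (∑ π : Equiv.Perm (Fin n),
                if (∀ j : Fin t, relPos π t ⟨j.1, Nat.lt_of_lt_of_le j.isLt (by omega)⟩ = (τ.symm j).1) then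
                  (φ ^ dKT π 1 / ∑ σ : Equiv.Perm (Fin n), φ ^ dKT σ 1) else 0) ≤
                C * (k : ℝ) * max (1 / (t : ℝ)) (1 - φ) := by
  classical
  refine ⟨24000, by norm_num, ?_⟩
  intro n φ hφ0 hφ1 t k ht2 hk1 hkt hkφ hn τ x y hxy
  have htn : t ≤ n := by omega
  show (∑ π : Equiv.Perm (Fin n),
      if AevP n t htn τ π then
        (φ ^ dKT π 1 / ∑ σ : Equiv.Perm (Fin n), φ ^ dKT σ 1) *
          (((relPos π (t + k) (fe n t htn y) : ℝ) -
            (relPos π (t + k) (fe n t htn x) : ℝ)) - 1) else 0) /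
    (∑ π : Equiv.Perm (Fin n),
      if AevP n t htn τ π then
        (φ ^ dKT π 1 / ∑ σ : Equiv.Perm (Fin n), φ ^ dKT σ 1) else 0) ≤
      24000 * (k : ℝ) * max (1 / (t : ℝ)) (1 - φ)
  have htpos : (0:ℝ) < (t:ℝ) := by
    have : (2:ℝ) ≤ (t:ℝ) := by exact_mod_cast ht2
    linarith
  have hμpos : (0:ℝ) < max (1 / (t : ℝ)) (1 - φ) :=
    lt_of_lt_of_le (by positivity) (le_max_left _ _)
  have hkpos : (0:ℝ) < (k:ℝ) := by
    have : (1:ℝ) ≤ (k:ℝ) := by exact_mod_cast hk1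
    linarith
  have hRHSpos : (0:ℝ) < 24000 * (k:ℝ) * max (1 / (t : ℝ)) (1 - φ) := by positivity
  have hZs1 : (1:ℝ) ≤ ∑ σ : Equiv.Perm (Fin n), φ ^ dKT σ 1 := by
    have h := Finset.single_le_sum (f := fun σ : Equiv.Perm (Fin n) => φ ^ dKT σ 1)
      (fun σ _ => by positivity) (Finset.mem_univ 1)
    simpa [dKT_one_one] using h
  have hZs0 : (∑ σ : Equiv.Perm (Fin n), φ ^ dKT σ 1) ≠ 0 := by linarith
  have hnum_eq : (∑ π : Equiv.Perm (Fin n),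
      if AevP n t htn τ π then
        (φ ^ dKT π 1 / ∑ σ : Equiv.Perm (Fin n), φ ^ dKT σ 1) *
          (((relPos π (t + k) (fe n t htn y) : ℝ) -
            (relPos π (t + k) (fe n t htn x) : ℝ)) - 1) else 0)
      = (∑ π : Equiv.Perm (Fin n),
          if AevP n t htn τ π then
            wgt φ π * (((relPos π (t + k) (fe n t htn y) : ℝ)
              - (relPos π (t + k) (fe n t htn x) : ℝ)) - 1) else 0)
        / (∑ σ : Equiv.Perm (Fin n), φ ^ dKT σ 1) := by
    rw [Finset.sum_div]
    apply Finset.sum_congr rfl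
    intro π _
    by_cases h : AevP n t htn τ π
    · rw [if_pos h, if_pos h]
      unfold wgt
      rw [div_mul_eq_mul_div]
    · rw [if_neg h, if_neg h, zero_div]
  have hden_eq : (∑ π : Equiv.Perm (Fin n),
      if AevP n t htn τ π then
        (φ ^ dKT π 1 / ∑ σ : Equiv.Perm (Fin n), φ ^ dKT σ 1) else 0)
      = (∑ π : Equiv.Perm (Fin n), if AevP n t htn τ π then wgt φ π else 0)
        / (∑ σ : Equiv.Perm (Fin n), φ ^ dKT σ 1) := by
    rw [Finset.sum_div]
    apply Finset.sum_congr rfl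
    intro π _
    by_cases h : AevP n t htn τ π
    · rw [if_pos h, if_pos h]
      rfl
    · rw [if_neg h, if_neg h, zero_div]
  rw [hnum_eq, hden_eq]
  have hDnn : (0:ℝ) ≤ ∑ π : Equiv.Perm (Fin n), if AevP n t htn τ π then wgt φ π else 0 :=
    Finset.sum_nonneg (fun π _ => by
      by_cases h : AevP n t htn τ π
      · rw [if_pos h]; exact wgt_nonneg hφ0 π
      · rw [if_neg h])
  rcases hDnn.eq_or_lt with hD0 | hDpos
  · have hall := (Finset.sum_eq_zero_iff_of_nonneg (fun π _ => by
        by_cases h : AevP n t htn τ π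
        · rw [if_pos h]; exact wgt_nonneg hφ0 π
        · rw [if_neg h] : ∀ π ∈ (Finset.univ : Finset (Equiv.Perm (Fin n))),
            (0:ℝ) ≤ if AevP n t htn τ π then wgt φ π else 0)).mp hD0.symm
    have hNum0 : (∑ π : Equiv.Perm (Fin n),
        if AevP n t htn τ π then
          wgt φ π * (((relPos π (t + k) (fe n t htn y) : ℝ)
            - (relPos π (t + k) (fe n t htn x) : ℝ)) - 1) else 0) = 0 := by
      apply Finset.sum_eq_zero
      intro π _
      by_cases h : AevP n t htn τ π
      · rw [if_pos h]
        have hw := hall π (Finset.mem_univ π)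
        rw [if_pos h] at hw
        rw [hw, zero_mul]
      · rw [if_neg h]
    rw [hNum0, ← hD0]
    simp only [zero_div]
    linarith
  · rw [div_div_div_cancel_right₀]
    · rw [div_le_iff₀ hDpos]
      exact core hφ0 hφ1 ht2 hk1 hkt hkφ hn htn τ x y hxy
    · exact hZs0

lemma ite_inst_eq {p : Prop} (i1 i2 : Decidable p) (a b : ℝ) :
    @ite ℝ p i1 a b = @ite ℝ p i2 a b := by
  by_cases hp : p
  · rw [if_pos hp, if_pos hp]
  · rw [if_neg hp, if_neg hp]

/-- Expected number of in-between insertions. There is a universal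
constant `C` such that, conditioned on the permutation induced by `π ~ M(φ, id)` on the
first `t` elements being `τ`, in which `x` and `y` are consecutive, the expected number of
elements among the next `k` lying strictly between `x` and `y` in the permutation induced
on the first `t + k` elements is at most `C k max(1/t, 1 - φ)`. -/
theorem expected_gaps :
    ∃ C : ℝ, 0 < C ∧
      ∀ (n : ℕ) (φ : ℝ), 0 ≤ φ → φ < 1 →
        ∀ (t k : ℕ), 2 ≤ t → 1 ≤ k → k ≤ t → (k : ℝ) ≤ 1 / (1 - φ) →
          ∀ hn : t + k ≤ n,
            ∀ (τ : Equiv.Perm (Fin t)) (x y : Fin t),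
              (τ.symm y).1 = (τ.symm x).1 + 1 →
              mCondExp φ 1
                  (fun π : Equiv.Perm (Fin n) =>
                    ((relPos π (t + k) ⟨y.1, by have := y.isLt; omega⟩ : ℝ) -
                      (relPos π (t + k) ⟨x.1, by have := x.isLt; omega⟩ : ℝ)) - 1)
                  (fun π : Equiv.Perm (Fin n) =>
                    ∀ j : Fin t, relPos π t ⟨j.1, by have := j.isLt; omega⟩ = (τ.symm j).1) ≤
                C * (k : ℝ) * max (1 / (t : ℝ)) (1 - φ) := by
  classical
  obtain ⟨C, hC0, hC⟩ := expected_gaps'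
  refine ⟨C, hC0, ?_⟩
  intro n φ hφ0 hφ1 t k ht2 hk1 hkt hkφ hn τ x y hxy
  have h := hC n φ hφ0 hφ1 t k ht2 hk1 hkt hkφ hn τ x y hxy
  unfold mCondExp mProb mallowsPMF
  convert h using 2
  · apply Finset.sum_congr rfl
    intro π _
    exact ite_inst_eq _ _ _ _
  · apply Finset.sum_congr rfl
    intro π _
    exact ite_inst_eq _ _ _ _


end Mallows
end

section
/- There is a universal constant C such that the following holds. Let M(φ, id) be a Mallows model on n elements with 0 ≤ φ < 1, and let x, y, z ∈ [n] satisfy x < y < z and z − y ≤ min(y, 1/(1 − φ)). Then for every integer s with 1 ≤ s < y, the difference between the conditional probability over π ~ M(φ, id) that π^{-1}(x) > π^{-1}(z) given that π_{id:y}^{-1}(x) = s, and the conditional probability that π^{-1}(x) > π^{-1}(z) given that π_{id:y}^{-1}(x) = s + 1, has absolute value at most C·max(1/z, 1 − φ). -/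
open scoped Classical
open Finset

namespace Mallows

/-- Conditional probability of `A` given `B`, under `M(φ, π₀)`. -/
noncomputable def mCondProb {n : ℕ} (φ : ℝ) (π₀ : Equiv.Perm (Fin n))
    (A B : Equiv.Perm (Fin n) → Prop) : ℝ :=
  (∑ π : Equiv.Perm (Fin n), if A π ∧ B π then mallowsPMF φ π₀ π else 0) / mProb φ π₀ B

lemma succAbove_val {k : ℕ} (pos : Fin (k+1)) (v : Fin k) :
    (pos.succAbove v).1 = if v.1 < pos.1 then v.1 else v.1 + 1 := by
  rcases lt_or_ge v.castSucc pos with h | h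
  · rw [Fin.succAbove_of_castSucc_lt _ _ h]
    have : v.1 < pos.1 := h
    simp [this]
  · rw [Fin.succAbove_of_le_castSucc _ _ h]
    have : ¬ v.1 < pos.1 := by
      have : pos.1 ≤ v.1 := h
      omega
    simp [this]

lemma lt_succAbove_iff' {k : ℕ} (pos : Fin (k+1)) (v : Fin k) :
    pos < pos.succAbove v ↔ pos.1 ≤ v.1 := by
  rw [Fin.lt_iff_val_lt_val, succAbove_val]
  split_ifs with h <;> omega

lemma succAbove_lt_succAbove {k : ℕ} (pos : Fin (k+1)) (a b : Fin k) :
    pos.succAbove a < pos.succAbove b ↔ a < b := Fin.succAbove_lt_succAbove_iff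

lemma dKT_one_eq {n : ℕ} (π : Equiv.Perm (Fin n)) :
    dKT π 1 = ∑ i : Fin n, ∑ j : Fin n,
      if i < j ∧ π.symm j < π.symm i then 1 else 0 := by
  rw [dKT, Finset.card_filter, Fintype.sum_prod_type]
  refine Finset.sum_congr rfl (fun i _ => Finset.sum_congr rfl (fun j _ => ?_))
  refine if_congr ?_ rfl rfl
  simp only [Equiv.Perm.one_symm, Equiv.Perm.coe_one, id_eq]
  constructor
  · rintro ⟨hij, h⟩
    refine ⟨hij, ?_⟩
    have h1 : ¬ (π.symm i < π.symm j) := fun c => h ⟨fun _ => hij, fun _ => c⟩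
    have h2 : π.symm j ≠ π.symm i := fun e => (lt_irrefl i) (by
      have := π.symm.injective e
      omega)
    exact lt_of_le_of_ne (not_lt.mp h1) h2
  · rintro ⟨hij, hlt⟩
    exact ⟨hij, fun hiff => absurd (hiff.mpr hij) (asymm hlt)⟩

/-- Insertion: `ins k σ pos` is the permutation of `Fin (k+1)` whose inverse sends
`last` to `pos` and `castSucc j` to `pos.succAbove (σ.symm j)`. -/
noncomputable def ins (k : ℕ) (σ : Equiv.Perm (Fin k)) (pos : Fin (k+1)) :
    Equiv.Perm (Fin (k+1)) :=
  ((finSuccEquiv' (Fin.last k)).trans ((Equiv.optionCongr σ.symm).trans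
    (finSuccEquiv' pos).symm)).symm

@[simp] lemma ins_symm_last (k : ℕ) (σ : Equiv.Perm (Fin k)) (pos : Fin (k+1)) :
    (ins k σ pos).symm (Fin.last k) = pos := by
  simp only [ins, Equiv.symm_symm, Equiv.trans_apply, finSuccEquiv'_at,
    Equiv.optionCongr_apply, Option.map_none, finSuccEquiv'_symm_none]

@[simp] lemma ins_symm_castSucc (k : ℕ) (σ : Equiv.Perm (Fin k)) (pos : Fin (k+1))
    (j : Fin k) : (ins k σ pos).symm j.castSucc = pos.succAbove (σ.symm j) := by
  have h : j.castSucc = (Fin.last k).succAbove j := by rw [Fin.succAbove_last]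
  rw [h]
  simp only [ins, Equiv.symm_symm, Equiv.trans_apply, finSuccEquiv'_succAbove,
    Equiv.optionCongr_apply, Option.map_some, finSuccEquiv'_symm_some]

lemma ins_bijective (k : ℕ) :
    Function.Bijective (fun sp : Equiv.Perm (Fin k) × Fin (k+1) => ins k sp.1 sp.2) := by
  rw [Fintype.bijective_iff_injective_and_card]
  constructor
  · rintro ⟨σ, pos⟩ ⟨σ', pos'⟩ h
    simp only at h
    have hpos : pos = pos' := by
      rw [← ins_symm_last k σ pos, ← ins_symm_last k σ' pos', h]
    have hσ : σ = σ' := by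
      have : ∀ j : Fin k, σ.symm j = σ'.symm j := by
        intro j
        have h1 := ins_symm_castSucc k σ pos j
        have h2 := ins_symm_castSucc k σ' pos' j
        rw [← h, ← hpos] at h2
        have := h1.symm.trans h2
        exact (Fin.succAbove_right_injective (p := pos)) this
      have h2 : σ.symm = σ'.symm := Equiv.ext this
      have h3 := congrArg Equiv.symm h2
      simpa using h3
    exact Prod.ext hσ hpos
  · simp [Fintype.card_perm, Nat.factorial_succ, mul_comm]

lemma sum_perm_succ {k : ℕ} (f : Equiv.Perm (Fin (k+1)) → ℝ) :
    ∑ π : Equiv.Perm (Fin (k+1)), f π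
      = ∑ σ : Equiv.Perm (Fin k), ∑ pos : Fin (k+1), f (ins k σ pos) := by
  rw [← Fintype.sum_bijective _ (ins_bijective k) _ f (fun _ => rfl)]
  rw [Fintype.sum_prod_type]

lemma sum_indic_le {k : ℕ} (σ : Equiv.Perm (Fin k)) (pos : Fin (k+1)) :
    (∑ i : Fin k, if pos.1 ≤ (σ.symm i).1 then 1 else 0) = k - pos.1 := by
  rw [Equiv.sum_comp σ.symm (fun v : Fin k => if pos.1 ≤ v.1 then (1:ℕ) else 0)]
  rw [Fin.sum_univ_eq_sum_range (fun m => if pos.1 ≤ m then (1:ℕ) else 0) k]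
  rw [← Finset.card_filter]
  have : (Finset.range k).filter (fun i => pos.1 ≤ i) = Finset.Ico pos.1 k := by
    ext a; simp [Finset.mem_filter, Finset.mem_range, Finset.mem_Ico]; omega
  rw [this, Nat.card_Ico]

lemma dKT_ins (k : ℕ) (σ : Equiv.Perm (Fin k)) (pos : Fin (k+1)) :
    dKT (ins k σ pos) 1 = dKT σ 1 + (k - pos.1) := by
  set π := ins k σ pos with hπ
  rw [dKT_one_eq]
  rw [Fin.sum_univ_castSucc
    (f := fun i : Fin (k+1) => ∑ j : Fin (k+1), if i < j ∧ π.symm j < π.symm i then 1 else 0)]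
  have h2 : (∑ j : Fin (k+1),
      if Fin.last k < j ∧ π.symm j < π.symm (Fin.last k) then 1 else 0) = 0 := by
    refine Finset.sum_eq_zero (fun j _ => ?_)
    have : ¬ (Fin.last k < j) := not_lt.mpr (Fin.le_last j)
    simp [this]
  rw [h2, add_zero]
  have h1 : ∀ i : Fin k, (∑ j : Fin (k+1),
      if i.castSucc < j ∧ π.symm j < π.symm i.castSucc then 1 else 0)
      = (∑ j : Fin k, if i < j ∧ σ.symm j < σ.symm i then 1 else 0)
        + (if pos.1 ≤ (σ.symm i).1 then 1 else 0) := by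
    intro i
    rw [Fin.sum_univ_castSucc
      (f := fun j : Fin (k+1) => if i.castSucc < j ∧ π.symm j < π.symm i.castSucc then 1 else 0)]
    congr 1
    · refine Finset.sum_congr rfl (fun j _ => ?_)
      refine if_congr ?_ rfl rfl
      rw [hπ, ins_symm_castSucc, ins_symm_castSucc, Fin.castSucc_lt_castSucc_iff,
        Fin.succAbove_lt_succAbove_iff]
    · refine if_congr ?_ rfl rfl
      rw [hπ, ins_symm_last, ins_symm_castSucc]
      have hc : i.castSucc < Fin.last k := Fin.castSucc_lt_last i
      rw [lt_succAbove_iff']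
      exact ⟨fun h => h.2, fun h => ⟨hc, h⟩⟩
  rw [Finset.sum_congr rfl (fun i _ => h1 i), Finset.sum_add_distrib, sum_indic_le,
    dKT_one_eq]

lemma relPos_ins (k : ℕ) (σ : Equiv.Perm (Fin k)) (pos : Fin (k+1)) (t : ℕ)
    (ht : t ≤ k) (j : Fin k) :
    relPos (ins k σ pos) t j.castSucc = relPos σ t j := by
  rw [relPos, relPos, Finset.card_filter, Finset.card_filter]
  rw [Fin.sum_univ_castSucc (f := fun i : Fin (k+1) =>
    if i.1 < t ∧ (ins k σ pos).symm i < (ins k σ pos).symm j.castSucc then 1 else 0)]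
  have hlast : ¬ ((Fin.last k).1 < t) := by simp [Fin.last]; omega
  rw [if_neg (fun h => hlast h.1), add_zero]
  refine Finset.sum_congr rfl (fun i _ => ?_)
  refine if_congr ?_ rfl rfl
  rw [ins_symm_castSucc, ins_symm_castSucc, Fin.succAbove_lt_succAbove_iff]
  exact Iff.rfl

lemma xpos_ins (k : ℕ) (σ : Equiv.Perm (Fin k)) (pos : Fin (k+1)) (j : Fin k) :
    ((ins k σ pos).symm j.castSucc).1
      = (σ.symm j).1 + (if pos.1 ≤ (σ.symm j).1 then 1 else 0) := by
  rw [ins_symm_castSucc, succAbove_val]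
  split_ifs <;> omega

lemma sum_indic_lt {m : ℕ} (w : Fin m) :
    (∑ v : Fin m, if v < w then (1:ℕ) else 0) = w.1 := by
  have h : ∀ v : Fin m, (if v < w then (1:ℕ) else 0) = (if v.1 < w.1 then 1 else 0) := by
    intro v; rfl
  rw [Finset.sum_congr rfl (fun v _ => h v)]
  rw [Fin.sum_univ_eq_sum_range (fun m' => if m' < w.1 then (1:ℕ) else 0) m]
  rw [← Finset.card_filter]
  have : (Finset.range m).filter (fun i => i < w.1) = Finset.range w.1 := by
    ext a; simp [Finset.mem_filter, Finset.mem_range]; omega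
  rw [this, Finset.card_range]

lemma relPos_full {m : ℕ} (σ : Equiv.Perm (Fin m)) (j : Fin m) (t : ℕ) (ht : m ≤ t) :
    relPos σ t j = (σ.symm j).1 := by
  rw [relPos, Finset.card_filter]
  have h : ∀ i : Fin m, (if i.1 < t ∧ σ.symm i < σ.symm j then (1:ℕ) else 0)
      = (if σ.symm i < σ.symm j then 1 else 0) := by
    intro i
    refine if_congr ⟨fun h => h.2, fun h => ⟨lt_of_lt_of_le i.isLt ht, h⟩⟩ rfl rfl
  rw [Finset.sum_congr rfl (fun i _ => h i)]
  rw [Equiv.sum_comp σ.symm (fun v : Fin m => if v < σ.symm j then (1:ℕ) else 0)]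
  exact sum_indic_lt _

/-- Master strip lemma. -/
lemma stripGen {k : ℕ} (φ : ℝ) (F : Equiv.Perm (Fin (k+1)) → ℝ)
    (G : Equiv.Perm (Fin k) → ℝ) (h : ℕ → ℕ → ℝ) (xk : Fin k)
    (H : ∀ σ pos, F (ins k σ pos) = G σ * h ((σ.symm xk).1) (k - pos.1)) :
    ∑ π : Equiv.Perm (Fin (k+1)), φ ^ (dKT π 1) * F π
      = ∑ σ : Equiv.Perm (Fin k), φ ^ (dKT σ 1) *
          (G σ * ∑ j ∈ range (k+1), φ ^ j * h ((σ.symm xk).1) j) := by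
  rw [sum_perm_succ (fun π => φ ^ (dKT π 1) * F π)]
  refine Finset.sum_congr rfl (fun σ _ => ?_)
  have step1 : ∀ pos : Fin (k+1),
      φ ^ (dKT (ins k σ pos) 1) * F (ins k σ pos)
      = φ ^ (dKT σ 1) * (φ ^ (k - pos.1) * (G σ * h ((σ.symm xk).1) (k - pos.1))) := by
    intro pos
    rw [dKT_ins, H, pow_add]; ring
  rw [Finset.sum_congr rfl (fun pos _ => step1 pos), ← Finset.mul_sum]
  congr 1
  rw [Fin.sum_univ_eq_sum_range
    (fun m => φ ^ (k - m) * (G σ * h ((σ.symm xk).1) (k - m))) (k+1)]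
  have step2 : ∀ i ∈ range (k+1), φ ^ (k - i) * (G σ * h ((σ.symm xk).1) (k - i))
      = G σ * (φ ^ (k - i) * h ((σ.symm xk).1) (k - i)) := fun i _ => by ring
  rw [Finset.sum_congr rfl step2, ← Finset.mul_sum]
  congr 1
  rw [← Finset.sum_range_reflect]
  refine Finset.sum_congr rfl (fun j hj => ?_)
  have hjk : j ≤ k := by simpa [Nat.lt_succ_iff] using hj
  have h1 : k + 1 - 1 - j = k - j := by omega
  have h2 : k - (k - j) = j := by omega
  rw [h1, h2]

/-- Geometric sum `1 + φ + ⋯ + φ^(m-1)`. -/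
noncomputable def Zg (φ : ℝ) (m : ℕ) : ℝ := ∑ j ∈ Finset.range m, φ ^ j

/-- The recursively defined conditional inversion probability function. -/
noncomputable def gA (φ : ℝ) (zz : ℕ) : ℕ → ℕ → ℝ
  | 0, p => (∑ j ∈ Finset.range (zz+1), φ ^ j * (if zz ≤ p + j then 1 else 0)) / Zg φ (zz+1)
  | (d+1), p => (∑ j ∈ Finset.range (zz - (d+1) + 1),
      φ ^ j * gA φ zz d (p + if zz - (d+1) ≤ p + j then 1 else 0)) / Zg φ (zz - (d+1) + 1)

lemma gA_zero (φ : ℝ) (zz p : ℕ) :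
    gA φ zz 0 p
      = (∑ j ∈ Finset.range (zz+1), φ ^ j * (if zz ≤ p + j then 1 else 0)) / Zg φ (zz+1) := by
  rfl

lemma gA_succ (φ : ℝ) (zz d p : ℕ) :
    gA φ zz (d+1) p = (∑ j ∈ Finset.range (zz - (d+1) + 1),
      φ ^ j * gA φ zz d (p + if zz - (d+1) ≤ p + j then 1 else 0)) / Zg φ (zz - (d+1) + 1) := by
  rfl

/-- The recursive bound on increments of `gA`. -/
noncomputable def Kb (φ : ℝ) (zz : ℕ) : ℕ → ℝ
  | 0 => 1 / Zg φ (zz+1)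
  | (d+1) => Kb φ zz d * (1 + 1 / Zg φ (zz - d))

section Chains

variable (φ : ℝ) (X Y r : ℕ)

/-- Weight of the event `relPos = r` at size `k`. -/
noncomputable def WB (k : ℕ) (hx : X < k) : ℝ :=
  ∑ σ : Equiv.Perm (Fin k), φ ^ (dKT σ 1) *
    (if relPos σ Y ⟨X, hx⟩ = r then 1 else 0)

/-- Weight of the event `A ∧ relPos = r` at size `k`. -/
noncomputable def WAB (Z : ℕ) (k : ℕ) (hx : X < k) (hz : Z < k) : ℝ :=
  ∑ π : Equiv.Perm (Fin k), φ ^ (dKT π 1) *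
    (if (π.symm ⟨Z, hz⟩ < π.symm ⟨X, hx⟩ ∧ relPos π Y ⟨X, hx⟩ = r) then 1 else 0)

/-- Weight of the event `relPos = r` times `gA` of the position of `X`, at size `k`. -/
noncomputable def WG (zz : ℕ) (k : ℕ) (hx : X < k) : ℝ :=
  ∑ σ : Equiv.Perm (Fin k), φ ^ (dKT σ 1) *
    ((if relPos σ Y ⟨X, hx⟩ = r then 1 else 0) * gA φ zz (zz - k) ((σ.symm ⟨X, hx⟩).1))

lemma ite_and_mul (P Q : Prop) [Decidable P] [Decidable Q] :
    (if P ∧ Q then (1:ℝ) else 0) = (if Q then 1 else 0) * (if P then 1 else 0) := by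
  by_cases hP : P <;> by_cases hQ : Q <;> simp [hP, hQ]

lemma WB_succ (k : ℕ) (hx : X < k) (hx' : X < k+1) (hY : Y ≤ k) :
    WB φ X Y r (k+1) hx'
      = Zg φ (k+1) * WB φ X Y r k hx := by
  have hcast : (⟨X, hx'⟩ : Fin (k+1))
      = (⟨X, hx⟩ : Fin k).castSucc := rfl
  rw [WB]
  rw [stripGen φ _ (fun σ => if relPos σ Y ⟨X, hx⟩ = r then 1 else 0) (fun _ _ => 1)
    ⟨X, hx⟩ (fun σ pos => by
      rw [mul_one, hcast, relPos_ins k σ pos Y hY])]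
  rw [WB, Finset.mul_sum]
  refine Finset.sum_congr rfl (fun σ _ => ?_)
  simp only [mul_one]
  rw [← Zg]
  ring

lemma WAB_succ (Z k : ℕ) (hx : X < k) (hz : Z < k) (hx' : X < k+1) (hz' : Z < k+1) (hY : Y ≤ k) :
    WAB φ X Y r Z (k+1) hx' hz'
      = Zg φ (k+1) * WAB φ X Y r Z k hx hz := by
  have hcx : (⟨X, hx'⟩ : Fin (k+1))
      = (⟨X, hx⟩ : Fin k).castSucc := rfl
  have hcz : (⟨Z, hz'⟩ : Fin (k+1))
      = (⟨Z, hz⟩ : Fin k).castSucc := rfl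
  rw [WAB]
  rw [stripGen φ _
    (fun σ => if (σ.symm ⟨Z, hz⟩ < σ.symm ⟨X, hx⟩ ∧ relPos σ Y ⟨X, hx⟩ = r) then 1 else 0)
    (fun _ _ => 1) ⟨X, hx⟩ (fun σ pos => by
      rw [mul_one, hcx, hcz, relPos_ins k σ pos Y hY, ins_symm_castSucc, ins_symm_castSucc]
      exact if_congr (and_congr_left' Fin.succAbove_lt_succAbove_iff) rfl rfl)]
  rw [WAB, Finset.mul_sum]
  refine Finset.sum_congr rfl (fun σ _ => ?_)
  simp only [mul_one]
  rw [← Zg]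
  ring

lemma WAB_boundary (zz : ℕ) (hx : X < zz) (hx' : X < zz+1) (hz' : zz < zz+1)
    (hY : Y ≤ zz) (hZg : Zg φ (zz+1) ≠ 0) :
    WAB φ X Y r zz (zz+1) hx' hz'
      = Zg φ (zz+1) * WG φ X Y r zz zz hx := by
  have hcx : (⟨X, hx'⟩ : Fin (zz+1))
      = (⟨X, hx⟩ : Fin zz).castSucc := rfl
  have hlast : (⟨zz, hz'⟩ : Fin (zz+1)) = Fin.last zz := rfl
  rw [WAB]
  rw [stripGen φ _
    (fun σ => if relPos σ Y ⟨X, hx⟩ = r then 1 else 0)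
    (fun p j => if zz ≤ p + j then 1 else 0) ⟨X, hx⟩ (fun σ pos => by
      rw [hcx, hlast, relPos_ins zz σ pos Y hY, ins_symm_last, ins_symm_castSucc, ite_and_mul]
      congr 1
      refine if_congr ?_ rfl rfl
      rw [lt_succAbove_iff']
      have hpos : pos.1 < zz + 1 := pos.isLt
      omega)]
  rw [WG, Finset.mul_sum]
  refine Finset.sum_congr rfl (fun σ _ => ?_)
  rw [Nat.sub_self, gA_zero]
  field_simp

lemma WG_succ (zz k : ℕ) (hx : X < k) (hx' : X < k+1) (hY : Y ≤ k) (hk : k + 1 ≤ zz)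
    (hZg : Zg φ (k+1) ≠ 0) :
    WG φ X Y r zz (k+1) hx'
      = Zg φ (k+1) * WG φ X Y r zz k hx := by
  have hcx : (⟨X, hx'⟩ : Fin (k+1))
      = (⟨X, hx⟩ : Fin k).castSucc := rfl
  rw [WG]
  rw [stripGen φ _
    (fun σ => if relPos σ Y ⟨X, hx⟩ = r then 1 else 0)
    (fun p j => gA φ zz (zz - (k+1)) (p + if k ≤ p + j then 1 else 0)) ⟨X, hx⟩
    (fun σ pos => by
      rw [hcx, relPos_ins k σ pos Y hY, xpos_ins]
      have hpos : pos.1 < k + 1 := pos.isLt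
      have hiff : (if pos.1 ≤ ((σ.symm ⟨X, hx⟩)).1 then 1 else 0)
          = (if k ≤ ((σ.symm ⟨X, hx⟩)).1 + (k - pos.1) then 1 else 0) := by
        split_ifs <;> omega
      rw [hiff])]
  rw [WG, Finset.mul_sum]
  refine Finset.sum_congr rfl (fun σ _ => ?_)
  have hd : zz - k = (zz - (k+1)) + 1 := by omega
  have hd2 : zz - (zz - (k+1) + 1) = k := by omega
  rw [hd, gA_succ, hd2]
  field_simp

lemma WG_bottom (zz : ℕ) (hx : X < Y) :
    WG φ X Y r zz Y hx = gA φ zz (zz - Y) r * WB φ X Y r Y hx := by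
  rw [WG, WB, Finset.mul_sum]
  refine Finset.sum_congr rfl (fun σ _ => ?_)
  rw [relPos_full σ ⟨X, hx⟩ Y (le_refl Y)]
  split_ifs with h
  · rw [h]; ring
  · ring

lemma Zg_pos {φ : ℝ} (hφ : 0 ≤ φ) (m : ℕ) (hm : 1 ≤ m) : 0 < Zg φ m := by
  refine Finset.sum_pos' (fun i _ => pow_nonneg hφ i) ⟨0, Finset.mem_range.mpr (by omega), by simp⟩

lemma WB_chain (hφ : 0 ≤ φ) (hXY : X < Y) :
    ∀ m (hm : Y ≤ m),
      WB φ X Y r m (lt_of_lt_of_le hXY hm)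
        = (∏ t ∈ Finset.Ico (Y+1) (m+1), Zg φ t) * WB φ X Y r Y hXY := by
  refine Nat.le_induction ?_ ?_
  · rw [Finset.Ico_self, Finset.prod_empty, one_mul]
  · intro k hk IH
    rw [WB_succ φ X Y r k (lt_of_lt_of_le hXY hk) _ hk, IH,
      Finset.prod_Ico_succ_top (by omega : Y + 1 ≤ k + 1)]
    ring

lemma WAB_chain (hφ : 0 ≤ φ) (zz : ℕ) (hXY : X < Y) (hYz : Y ≤ zz) :
    ∀ m (hm : zz + 1 ≤ m),
      WAB φ X Y r zz m (lt_of_lt_of_le (lt_of_lt_of_le hXY hYz) (le_trans (Nat.le_succ zz) hm))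
          (lt_of_lt_of_le (Nat.lt_succ_self zz) hm)
        = (∏ t ∈ Finset.Ico (zz+2) (m+1), Zg φ t)
            * WAB φ X Y r zz (zz+1) (lt_of_lt_of_le (lt_of_lt_of_le hXY hYz) (Nat.le_succ zz))
                (Nat.lt_succ_self zz) := by
  refine Nat.le_induction ?_ ?_
  · rw [Finset.Ico_self, Finset.prod_empty, one_mul]
  · intro k hk IH
    rw [WAB_succ φ X Y r zz k
        (lt_of_lt_of_le (lt_of_lt_of_le hXY hYz) (le_trans (Nat.le_succ zz) hk))
        (lt_of_lt_of_le (Nat.lt_succ_self zz) hk) _ _ (by omega), IH,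
      Finset.prod_Ico_succ_top (by omega : zz + 2 ≤ k + 1)]
    ring

lemma WG_chain (hφ : 0 ≤ φ) (zz : ℕ) (hXY : X < Y) :
    ∀ m (hm : Y ≤ m), m ≤ zz →
      WG φ X Y r zz m (lt_of_lt_of_le hXY hm)
        = (∏ t ∈ Finset.Ico (Y+1) (m+1), Zg φ t) * WG φ X Y r zz Y hXY := by
  refine Nat.le_induction ?_ ?_
  · intro _
    rw [Finset.Ico_self, Finset.prod_empty, one_mul]
  · intro k hk IH hk1
    rw [WG_succ φ X Y r zz k (lt_of_lt_of_le hXY hk) _ hk hk1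
        (ne_of_gt (Zg_pos hφ (k+1) (by omega))),
      IH (by omega), Finset.prod_Ico_succ_top (by omega : Y + 1 ≤ k + 1)]
    ring

end Chains

lemma mCondProb_mem_Icc {n : ℕ} (φ : ℝ) (hφ : 0 ≤ φ)
    (A B : Equiv.Perm (Fin n) → Prop) :
    0 ≤ mCondProb φ 1 A B ∧ mCondProb φ 1 A B ≤ 1 := by
  have hpmf : ∀ π : Equiv.Perm (Fin n), 0 ≤ mallowsPMF φ 1 π := by
    intro π
    rw [mallowsPMF]
    apply div_nonneg (pow_nonneg hφ _)
    exact Finset.sum_nonneg (fun σ _ => pow_nonneg hφ _)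
  have hnum0 : 0 ≤ ∑ π : Equiv.Perm (Fin n), if A π ∧ B π then mallowsPMF φ 1 π else 0 := by
    refine Finset.sum_nonneg (fun π _ => ?_)
    by_cases h : A π ∧ B π
    · rw [if_pos h]; exact hpmf π
    · rw [if_neg h]
  have hden0 : 0 ≤ mProb φ 1 B := by
    rw [mProb]
    refine Finset.sum_nonneg (fun π _ => ?_)
    by_cases h : B π
    · rw [if_pos h]; exact hpmf π
    · rw [if_neg h]
  have hle : (∑ π : Equiv.Perm (Fin n), if A π ∧ B π then mallowsPMF φ 1 π else 0)
      ≤ mProb φ 1 B := by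
    rw [mProb]
    refine Finset.sum_le_sum (fun π _ => ?_)
    by_cases h : A π ∧ B π
    · rw [if_pos h, if_pos h.2]
    · rw [if_neg h]
      by_cases h2 : B π
      · rw [if_pos h2]; exact hpmf π
      · rw [if_neg h2]
  exact ⟨div_nonneg hnum0 hden0, div_le_one_of_le₀ hle hden0⟩

lemma mCondProb_eq_gA {n : ℕ} (φ : ℝ) (hφ0 : 0 < φ) (x y z : Fin n)
    (hxy : x < y) (hyz : y < z) (r : ℕ) (hr : r < y.1 + 1) :
    mCondProb φ 1 (fun π => π.symm z < π.symm x) (fun π => relPos π (y.1 + 1) x = r)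
      = gA φ z.1 (z.1 - (y.1 + 1)) r := by
  have hφ : (0:ℝ) ≤ φ := le_of_lt hφ0
  have hXY : x.1 < y.1 + 1 := by
    have : x.1 < y.1 := hxy
    omega
  have hYz : y.1 + 1 ≤ z.1 := hyz
  have hzn : z.1 < n := z.isLt
  have hnm : z.1 + 1 ≤ n := hzn
  -- abbreviations
  set X := x.1 with hXdef
  set Y := y.1 + 1 with hYdef
  set zz := z.1 with hzzdef
  have hxn : X < n := lt_of_lt_of_le (lt_of_lt_of_le hXY hYz) (le_trans (Nat.le_succ zz) hnm)
  have hzn' : zz < n := lt_of_lt_of_le (Nat.lt_succ_self zz) hnm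
  have hxfin : (⟨X, hxn⟩ : Fin n) = x := rfl
  have hzfin : (⟨zz, hzn'⟩ : Fin n) = z := rfl
  set S := ∑ σ : Equiv.Perm (Fin n), φ ^ dKT σ 1 with hSdef
  have hS : 0 < S := Finset.sum_pos (fun σ _ => pow_pos hφ0 _) ⟨1, Finset.mem_univ 1⟩
  -- positivity of the base weight
  have hWBY : 0 < WB φ X Y r Y hXY := by
    rw [WB]
    refine Finset.sum_pos' (fun σ _ => ?_) ?_
    · by_cases h : relPos σ Y ⟨X, hXY⟩ = r
      · rw [if_pos h, mul_one]; exact le_of_lt (pow_pos hφ0 _)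
      · rw [if_neg h, mul_zero]
    · refine ⟨Equiv.swap ⟨X, hXY⟩ ⟨r, hr⟩, Finset.mem_univ _, ?_⟩
      have hrel : relPos (Equiv.swap (⟨X, hXY⟩ : Fin Y) ⟨r, hr⟩) Y ⟨X, hXY⟩ = r := by
        rw [relPos_full _ _ Y (le_refl Y), Equiv.symm_swap, Equiv.swap_apply_left]
      rw [hrel, if_pos rfl, mul_one]
      exact pow_pos hφ0 _
  have hgoal2 : WAB φ X Y r zz n hxn hzn' / S
      / (WB φ X Y r n (lt_of_lt_of_le hXY (le_trans hYz (le_trans (Nat.le_succ zz) hnm))) / S)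
      = gA φ zz (zz - Y) r := by
    rw [div_div_div_cancel_right₀ (ne_of_gt hS)]
    have hchain1 := WAB_chain φ X Y r hφ zz hXY hYz n hnm
    have hchain2 := WAB_boundary φ X Y r zz (lt_of_lt_of_le hXY hYz)
      (lt_of_lt_of_le (lt_of_lt_of_le hXY hYz) (Nat.le_succ zz)) (Nat.lt_succ_self zz)
      hYz (ne_of_gt (Zg_pos hφ (zz+1) (by omega)))
    have hchain3 := WG_chain φ X Y r hφ zz hXY zz hYz (le_refl zz)
    have hchain4 := WG_bottom φ X Y r zz hXY
    have hchain5 := WB_chain φ X Y r hφ hXY n (le_trans hYz (le_trans (Nat.le_succ zz) hnm))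
    rw [hchain1, hchain2, hchain3, hchain4, hchain5]
    -- products
    set P1 := ∏ t ∈ Finset.Ico (zz+2) (n+1), Zg φ t with hP1
    set P2 := ∏ t ∈ Finset.Ico (Y+1) (zz+1), Zg φ t with hP2
    have hsplit : (∏ t ∈ Finset.Ico (Y+1) (n+1), Zg φ t) = P2 * (Zg φ (zz+1) * P1) := by
      rw [hP1, hP2, ← Finset.prod_Ico_consecutive (fun t => Zg φ t)
        (by omega : Y + 1 ≤ zz + 1) (by omega : zz + 1 ≤ n + 1)]
      congr 1
      rw [Finset.prod_eq_prod_Ico_succ_bot (by omega : zz + 1 < n + 1)]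
    rw [hsplit]
    have hZgpos : ∀ m : ℕ, 1 ≤ m → 0 < Zg φ m := fun m hm => Zg_pos hφ m hm
    have hprodpos : 0 < P1 := Finset.prod_pos (fun t ht => hZgpos t (by
      rcases Finset.mem_Ico.mp ht with ⟨h1, _⟩; omega))
    have hprodpos2 : 0 < P2 := Finset.prod_pos (fun t ht => hZgpos t (by
      rcases Finset.mem_Ico.mp ht with ⟨h1, _⟩; omega))
    have hZz1 : 0 < Zg φ (zz+1) := hZgpos (zz+1) (by omega)
    have hc : P2 * (Zg φ (zz+1) * P1) ≠ 0 := by positivity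
    have harr : P1 * (Zg φ (zz+1) * (P2 * (gA φ zz (zz - Y) r * WB φ X Y r Y hXY)))
        = (P2 * (Zg φ (zz+1) * P1)) * (gA φ zz (zz - Y) r * WB φ X Y r Y hXY) := by ring
    rw [harr, mul_div_mul_left _ _ hc, mul_div_cancel_right₀ _ (ne_of_gt hWBY)]
  rw [mCondProb, ← hgoal2]
  congr 1
  · rw [WAB, Finset.sum_div]
    refine Finset.sum_congr rfl (fun π _ => ?_)
    rw [hxfin, hzfin]
    by_cases h : (π.symm z < π.symm x) ∧ relPos π Y x = r
    · rw [if_pos h, if_pos h, mul_one, mallowsPMF]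
    · rw [if_neg h, if_neg h, mul_zero, zero_div]
  · rw [mProb, WB, Finset.sum_div]
    refine Finset.sum_congr rfl (fun π _ => ?_)
    rw [hxfin]
    by_cases h : relPos π Y x = r
    · rw [if_pos h, if_pos h, mul_one, mallowsPMF]
    · rw [if_neg h, if_neg h, mul_zero, zero_div]

section Analytic

variable {φ : ℝ}

lemma sum_indic_bound (h0 : 0 ≤ φ) (h1 : φ ≤ 1) (m a0 : ℕ) (P : ℕ → Prop)
    [DecidablePred P] (hP : ∀ j, P j → a0 = j) :
    ∑ j ∈ Finset.range m, φ^j * (if P j then 1 else 0) ≤ 1 := by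
  calc ∑ j ∈ Finset.range m, φ^j * (if P j then 1 else 0)
      ≤ ∑ j ∈ Finset.range m, (if a0 = j then 1 else 0) := by
        refine Finset.sum_le_sum (fun j _ => ?_)
        by_cases hPj : P j
        · rw [if_pos hPj, mul_one, if_pos (hP j hPj)]
          exact pow_le_one₀ h0 h1
        · rw [if_neg hPj, mul_zero]
          split_ifs <;> norm_num
    _ ≤ 1 := by
        rw [Finset.sum_ite_eq]
        split_ifs <;> norm_num

lemma Zg_nonneg (h0 : 0 ≤ φ) (m : ℕ) : 0 ≤ Zg φ m :=
  Finset.sum_nonneg (fun j _ => pow_nonneg h0 j)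

lemma Kb_nonneg (h0 : 0 ≤ φ) (zz : ℕ) : ∀ d, 0 ≤ Kb φ zz d := by
  intro d
  induction d with
  | zero =>
    rw [Kb]
    exact div_nonneg zero_le_one (Zg_nonneg h0 _)
  | succ d ih =>
    rw [Kb]
    have h2 : (0:ℝ) ≤ 1 + 1 / Zg φ (zz - d) := by
      have := div_nonneg (zero_le_one (α := ℝ)) (Zg_nonneg h0 (zz - d))
      linarith
    exact mul_nonneg ih h2

/-- Monotonicity and increment bound for `gA`. -/
lemma gA_incr (h0 : 0 < φ) (h1 : φ ≤ 1) (zz : ℕ) :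
    ∀ d, d ≤ zz → ∀ p, 0 ≤ gA φ zz d (p+1) - gA φ zz d p ∧
      gA φ zz d (p+1) - gA φ zz d p ≤ Kb φ zz d := by
  intro d
  induction d with
  | zero =>
    intro _ p
    have hZ : 0 < Zg φ (zz+1) := Zg_pos (le_of_lt h0) (zz+1) (by omega)
    rw [gA_zero, gA_zero, div_sub_div_same, Kb]
    have hnum : (∑ j ∈ Finset.range (zz+1), φ ^ j * (if zz ≤ (p+1) + j then 1 else 0))
        - (∑ j ∈ Finset.range (zz+1), φ ^ j * (if zz ≤ p + j then 1 else 0))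
        = ∑ j ∈ Finset.range (zz+1), φ ^ j * (if zz = p + j + 1 then 1 else 0) := by
      rw [← Finset.sum_sub_distrib]
      refine Finset.sum_congr rfl (fun j _ => ?_)
      split_ifs <;> first | (exfalso; omega) | ring
    rw [hnum]
    constructor
    · apply div_nonneg _ (le_of_lt hZ)
      refine Finset.sum_nonneg (fun j _ => ?_)
      have hp := pow_nonneg (le_of_lt h0) j
      split_ifs <;> nlinarith
    · have hb := sum_indic_bound (le_of_lt h0) h1 (zz+1) (zz - p - 1)
        (fun j => zz = p + j + 1) (fun j hj => by omega)
      gcongr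
  | succ d ih =>
    intro hd p
    have hdz : d ≤ zz := by omega
    have IH := fun q => ih hdz q
    set K := zz - (d+1) with hK
    have hK1 : K + 1 = zz - d := by omega
    have hZ : 0 < Zg φ (K+1) := Zg_pos (le_of_lt h0) (K+1) (by omega)
    have hKb0 := Kb_nonneg (le_of_lt h0) zz d
    rw [gA_succ, gA_succ, div_sub_div_same]
    have hnum : (∑ j ∈ Finset.range (K+1),
          φ ^ j * gA φ zz d ((p+1) + if K ≤ (p+1) + j then 1 else 0))
        - (∑ j ∈ Finset.range (K+1),
          φ ^ j * gA φ zz d (p + if K ≤ p + j then 1 else 0))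
        = ∑ j ∈ Finset.range (K+1),
            φ ^ j * (gA φ zz d ((p+1) + if K ≤ (p+1) + j then 1 else 0)
              - gA φ zz d (p + if K ≤ p + j then 1 else 0)) := by
      rw [← Finset.sum_sub_distrib]
      exact Finset.sum_congr rfl (fun j _ => by ring)
    rw [hnum]
    have hdiff0 : ∀ j : ℕ, 0 ≤ gA φ zz d ((p+1) + if K ≤ (p+1) + j then 1 else 0)
        - gA φ zz d (p + if K ≤ p + j then 1 else 0) := by
      intro j
      rcases le_or_gt K (p + j) with hc1 | hc1
      · rw [if_pos (by omega : K ≤ (p+1) + j), if_pos hc1]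
        exact (IH (p+1)).1
      · rcases le_or_gt K ((p+1) + j) with hc2 | hc2
        · rw [if_pos hc2, if_neg (by omega)]
          simp only [add_zero]
          have h3 := (IH p).1
          have h4 := (IH (p+1)).1
          linarith
        · rw [if_neg (by omega), if_neg (by omega)]
          simp only [add_zero]
          exact (IH p).1
    have hdiffK : ∀ j : ℕ, gA φ zz d ((p+1) + if K ≤ (p+1) + j then 1 else 0)
        - gA φ zz d (p + if K ≤ p + j then 1 else 0)
        ≤ Kb φ zz d * (1 + if K = p + j + 1 then 1 else 0) := by
      intro j
      rcases le_or_gt K (p + j) with hc1 | hc1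
      · rw [if_pos (by omega : K ≤ (p+1) + j), if_pos hc1, if_neg (by omega)]
        have h3 := (IH (p+1)).2
        linarith
      · rcases le_or_gt K ((p+1) + j) with hc2 | hc2
        · rw [if_pos hc2, if_neg (by omega), if_pos (by omega)]
          simp only [add_zero]
          have h3 := (IH p).2
          have h4 := (IH (p+1)).2
          linarith
        · rw [if_neg (by omega), if_neg (by omega), if_neg (by omega)]
          simp only [add_zero]
          have h3 := (IH p).2
          linarith
    constructor
    · apply div_nonneg _ (le_of_lt hZ)
      refine Finset.sum_nonneg (fun j _ => ?_)
      exact mul_nonneg (pow_nonneg (le_of_lt h0) j) (hdiff0 j)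
    · have hT := sum_indic_bound (le_of_lt h0) h1 (K+1) (K - p - 1)
        (fun j => K = p + j + 1) (fun j hj => by omega)
      have hnumle : (∑ j ∈ Finset.range (K+1),
            φ ^ j * (gA φ zz d ((p+1) + if K ≤ (p+1) + j then 1 else 0)
              - gA φ zz d (p + if K ≤ p + j then 1 else 0)))
          ≤ Kb φ zz d * (Zg φ (K+1) + 1) := by
        calc (∑ j ∈ Finset.range (K+1),
            φ ^ j * (gA φ zz d ((p+1) + if K ≤ (p+1) + j then 1 else 0)
              - gA φ zz d (p + if K ≤ p + j then 1 else 0)))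
            ≤ ∑ j ∈ Finset.range (K+1),
                φ ^ j * (Kb φ zz d * (1 + if K = p + j + 1 then 1 else 0)) := by
              refine Finset.sum_le_sum (fun j _ => ?_)
              exact mul_le_mul_of_nonneg_left (hdiffK j) (pow_nonneg (le_of_lt h0) j)
          _ = Kb φ zz d * Zg φ (K+1)
              + Kb φ zz d * ∑ j ∈ Finset.range (K+1),
                  φ ^ j * (if K = p + j + 1 then 1 else 0) := by
              rw [Zg, Finset.mul_sum, Finset.mul_sum, ← Finset.sum_add_distrib]
              exact Finset.sum_congr rfl (fun j _ => by ring)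
          _ ≤ Kb φ zz d * Zg φ (K+1) + Kb φ zz d * 1 := by
              have := mul_le_mul_of_nonneg_left hT hKb0
              linarith
          _ = Kb φ zz d * (Zg φ (K+1) + 1) := by ring
      calc (∑ j ∈ Finset.range (K+1),
            φ ^ j * (gA φ zz d ((p+1) + if K ≤ (p+1) + j then 1 else 0)
              - gA φ zz d (p + if K ≤ p + j then 1 else 0))) / Zg φ (K+1)
          ≤ (Kb φ zz d * (Zg φ (K+1) + 1)) / Zg φ (K+1) := by
            gcongr
          _ = Kb φ zz d * (1 + 1 / Zg φ (K+1)) := by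
            field_simp
          _ = Kb φ zz (d+1) := by
            rw [Kb, hK1]

end Analytic

section Numeric

variable {φ : ℝ}

lemma Zg_mono (h0 : 0 ≤ φ) {a b : ℕ} (hab : a ≤ b) : Zg φ a ≤ Zg φ b := by
  rw [Zg, Zg]
  exact Finset.sum_le_sum_of_subset_of_nonneg (Finset.range_subset_range.mpr hab)
    (fun j _ _ => pow_nonneg h0 j)

lemma Kb_le_exp (h0 : 0 ≤ φ) (zz : ℕ) :
    ∀ d, Kb φ zz d ≤ (1 / Zg φ (zz+1)) * Real.exp (∑ e ∈ Finset.range d, 1 / Zg φ (zz - e)) := by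
  intro d
  induction d with
  | zero =>
    rw [Kb, Finset.range_zero, Finset.sum_empty, Real.exp_zero, mul_one]
  | succ d ih =>
    rw [Kb, Finset.sum_range_succ, Real.exp_add, ← mul_assoc]
    have ha : (0:ℝ) ≤ 1 / Zg φ (zz - d) := div_nonneg zero_le_one (Zg_nonneg h0 _)
    have h1 : Kb φ zz d * (1 + 1 / Zg φ (zz - d))
        ≤ ((1 / Zg φ (zz+1)) * Real.exp (∑ e ∈ Finset.range d, 1 / Zg φ (zz - e)))
          * (1 + 1 / Zg φ (zz - d)) :=
      mul_le_mul_of_nonneg_right ih (by linarith)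
    have h2 : (1 + 1 / Zg φ (zz - d)) ≤ Real.exp (1 / Zg φ (zz - d)) := by
      have := Real.add_one_le_exp (1 / Zg φ (zz - d))
      linarith
    have h3 : ((1 / Zg φ (zz+1)) * Real.exp (∑ e ∈ Finset.range d, 1 / Zg φ (zz - e)))
          * (1 + 1 / Zg φ (zz - d))
        ≤ ((1 / Zg φ (zz+1)) * Real.exp (∑ e ∈ Finset.range d, 1 / Zg φ (zz - e)))
          * Real.exp (1 / Zg φ (zz - d)) := by
      refine mul_le_mul_of_nonneg_left h2 ?_
      have := Real.exp_pos (∑ e ∈ Finset.range d, 1 / Zg φ (zz - e))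
      have := div_nonneg (zero_le_one (α := ℝ)) (Zg_nonneg h0 (zz+1))
      positivity
    linarith

lemma pow_ge_exp_neg_two (hφ2 : 1/2 ≤ φ) (hφ1 : φ < 1) (k0 : ℕ)
    (hk : (k0:ℝ) * (1 - φ) ≤ 1) : Real.exp (-2) ≤ φ ^ k0 := by
  have hφpos : (0:ℝ) < φ := by linarith
  have h1φ : 1/φ ≤ 1 + 2*(1-φ) := by
    rw [div_le_iff₀ hφpos]
    nlinarith
  have h2 : (1/φ)^k0 ≤ (1+2*(1-φ))^k0 := pow_le_pow_left₀ (by positivity) h1φ k0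
  have h3 : (1+2*(1-φ))^k0 ≤ Real.exp (2*(1-φ))^k0 := by
    refine pow_le_pow_left₀ (by nlinarith) ?_ k0
    have := Real.add_one_le_exp (2*(1-φ))
    linarith
  have h4 : Real.exp (2*(1-φ))^k0 = Real.exp ((k0:ℝ) * (2*(1-φ))) :=
    (Real.exp_nat_mul _ k0).symm
  have h5 : Real.exp ((k0:ℝ) * (2*(1-φ))) ≤ Real.exp 2 := by
    apply Real.exp_le_exp.mpr
    nlinarith
  have h6 : (1/φ)^k0 ≤ Real.exp 2 := by
    calc (1/φ)^k0 ≤ (1+2*(1-φ))^k0 := h2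
      _ ≤ Real.exp (2*(1-φ))^k0 := h3
      _ = Real.exp ((k0:ℝ) * (2*(1-φ))) := h4
      _ ≤ Real.exp 2 := h5
  have h7 : (1/φ)^k0 = 1/φ^k0 := by rw [div_pow, one_pow]
  rw [h7] at h6
  have hppos : (0:ℝ) < φ^k0 := pow_pos hφpos k0
  have hepos : (0:ℝ) < Real.exp 2 := Real.exp_pos 2
  rw [div_le_iff₀ hppos] at h6
  rw [Real.exp_neg]
  rw [inv_le_iff_one_le_mul₀ hepos]
  linarith [mul_comm (Real.exp 2) (φ^k0)]

lemma sum_invZg_le (hφ2 : 1/2 ≤ φ) (hφ1 : φ < 1) (Y zz : ℕ) (hY : 1 ≤ Y) (hYz : Y ≤ zz)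
    (hk0Y : zz - Y + 1 ≤ Y)
    (hk : ((zz - Y + 1 : ℕ):ℝ) * (1 - φ) ≤ 1) :
    ∑ e ∈ Finset.range (zz - Y), 1 / Zg φ (zz - e) ≤ Real.exp 2 := by
  have h0 : (0:ℝ) ≤ φ := by linarith
  have hφpos : (0:ℝ) < φ := by linarith
  set d := zz - Y with hd
  set k0 := d + 1 with hk0
  have hZk0pos : 0 < Zg φ k0 := Zg_pos h0 k0 (by omega)
  have hstep1 : ∑ e ∈ Finset.range d, 1 / Zg φ (zz - e) ≤ (d:ℝ) * (1 / Zg φ k0) := by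
    calc ∑ e ∈ Finset.range d, 1 / Zg φ (zz - e)
        ≤ ∑ _e ∈ Finset.range d, 1 / Zg φ k0 := by
          refine Finset.sum_le_sum (fun e he => ?_)
          have hek : k0 ≤ zz - e := by
            have := Finset.mem_range.mp he
            omega
          exact one_div_le_one_div_of_le hZk0pos (Zg_mono h0 hek)
      _ = (d:ℝ) * (1 / Zg φ k0) := by
          rw [Finset.sum_const, Finset.card_range, nsmul_eq_mul]
  have hpow := pow_ge_exp_neg_two hφ2 hφ1 k0 hk
  have hppos : (0:ℝ) < φ^k0 := pow_pos hφpos k0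
  have hZk0 : (k0:ℝ) * φ^k0 ≤ Zg φ k0 := by
    rw [Zg]
    calc (k0:ℝ) * φ^k0 = ∑ _j ∈ Finset.range k0, φ^k0 := by
          rw [Finset.sum_const, Finset.card_range, nsmul_eq_mul]
      _ ≤ ∑ j ∈ Finset.range k0, φ^j := by
          refine Finset.sum_le_sum (fun j hj => ?_)
          exact pow_le_pow_of_le_one h0 (le_of_lt hφ1) (le_of_lt (Finset.mem_range.mp hj))
  have hk0pos : (0:ℝ) < (k0:ℝ) := by positivity
  have hmul : (0:ℝ) < (k0:ℝ) * φ^k0 := by positivity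
  have hstep2 : (d:ℝ) * (1 / Zg φ k0) ≤ (d:ℝ) * (1 / ((k0:ℝ) * φ^k0)) := by
    refine mul_le_mul_of_nonneg_left ?_ (by positivity)
    exact one_div_le_one_div_of_le hmul hZk0
  have hstep3 : (d:ℝ) * (1 / ((k0:ℝ) * φ^k0)) ≤ 1 / φ^k0 := by
    rw [one_div, mul_inv, ← mul_assoc, one_div]
    have hdk : (d:ℝ) * (k0:ℝ)⁻¹ ≤ 1 := by
      rw [← div_eq_mul_inv, div_le_one hk0pos]
      exact_mod_cast Nat.le_succ d
    calc (d:ℝ) * (k0:ℝ)⁻¹ * (φ^k0)⁻¹ ≤ 1 * (φ^k0)⁻¹ :=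
          mul_le_mul_of_nonneg_right hdk (by positivity)
      _ = (φ^k0)⁻¹ := one_mul _
  have hstep4 : 1 / φ^k0 ≤ Real.exp 2 := by
    rw [div_le_iff₀ hppos]
    rw [Real.exp_neg] at hpow
    have := Real.exp_pos (2:ℝ)
    calc (1:ℝ) = (Real.exp 2)⁻¹ * Real.exp 2 := by field_simp
      _ ≤ φ^k0 * Real.exp 2 := by
          exact mul_le_mul_of_nonneg_right hpow (le_of_lt this)
      _ = Real.exp 2 * φ^k0 := mul_comm _ _
  linarith

lemma invZg_le_max (h0 : 0 ≤ φ) (hφ1 : φ < 1) (m : ℕ) (hm : 1 ≤ m) :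
    1 / Zg φ m ≤ 2 * max (1/(m:ℝ)) (1-φ) := by
  have hu : (0:ℝ) < 1 - φ := by linarith
  have hmpos : (0:ℝ) < (m:ℝ) := by exact_mod_cast hm
  rcases le_or_gt (φ^m) (1/2) with hc | hc
  · have hgeom : Zg φ m = (1 - φ^m)/(1-φ) := by
      rw [Zg, geom_sum_eq (ne_of_lt hφ1)]
      rw [div_eq_div_iff (by linarith) (by linarith)]
      ring
    have hZ : (1/2)/(1-φ) ≤ Zg φ m := by
      rw [hgeom]
      gcongr
      linarith
    have hpos : (0:ℝ) < (1/2)/(1-φ) := by positivity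
    have h1 : 1/Zg φ m ≤ 1/((1/2)/(1-φ)) := one_div_le_one_div_of_le hpos hZ
    have h2 : 1/((1/2)/(1-φ)) = 2*(1-φ) := by
      field_simp
    rw [h2] at h1
    calc 1/Zg φ m ≤ 2*(1-φ) := h1
      _ ≤ 2 * max (1/(m:ℝ)) (1-φ) := by
          have := le_max_right (1/(m:ℝ)) (1-φ)
          linarith
  · have hZ : (m:ℝ)/2 ≤ Zg φ m := by
      rw [Zg]
      calc (m:ℝ)/2 ≤ (m:ℝ) * φ^m := by nlinarith
        _ = ∑ _j ∈ Finset.range m, φ^m := by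
            rw [Finset.sum_const, Finset.card_range, nsmul_eq_mul]
        _ ≤ ∑ j ∈ Finset.range m, φ^j := by
            refine Finset.sum_le_sum (fun j hj => ?_)
            exact pow_le_pow_of_le_one h0 (le_of_lt hφ1) (le_of_lt (Finset.mem_range.mp hj))
    have hpos : (0:ℝ) < (m:ℝ)/2 := by positivity
    have h1 : 1/Zg φ m ≤ 1/((m:ℝ)/2) := one_div_le_one_div_of_le hpos hZ
    have h2 : 1/((m:ℝ)/2) = 2*(1/(m:ℝ)) := by
      field_simp
    rw [h2] at h1
    calc 1/Zg φ m ≤ 2*(1/(m:ℝ)) := h1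
      _ ≤ 2 * max (1/(m:ℝ)) (1-φ) := by
          have := le_max_left (1/(m:ℝ)) (1-φ)
          linarith

lemma exp_exp_two_le : Real.exp (Real.exp 2) ≤ 5000 := by
  have he1 : Real.exp 1 < 2.7182818286 := Real.exp_one_lt_d9
  have he1pos : (0:ℝ) < Real.exp 1 := Real.exp_pos 1
  have hexp2 : Real.exp 2 ≤ 8 := by
    have h2 : Real.exp 2 = (Real.exp 1)^2 := by
      rw [← Real.exp_nat_mul]
      norm_num
    rw [h2]
    nlinarith
  have h8 : Real.exp 8 ≤ 5000 := by
    have h2 : Real.exp 8 = (Real.exp 1)^8 := by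
      rw [← Real.exp_nat_mul]
      norm_num
    rw [h2]
    nlinarith [pow_lt_pow_left₀ he1 (le_of_lt he1pos) (by norm_num : (8:ℕ) ≠ 0),
      pow_nonneg (le_of_lt he1pos) 8]
  calc Real.exp (Real.exp 2) ≤ Real.exp 8 := Real.exp_le_exp.mpr hexp2
    _ ≤ 5000 := h8

end Numeric

/-- Small change in the conditional inversion probability. There is a
universal constant `C` such that for elements `x < y < z` of `[n]` (represented 0-indexed,
so the paper's element `y` is `y.1 + 1`) with `z - y ≤ min(y, 1/(1-φ))`, and any `1 ≤ s < y`,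
the conditional probabilities of `π⁻¹ x > π⁻¹ z` given that the (1-indexed) position of `x`
among the first `y` elements is `s`, respectively `s + 1`, differ by at most
`C max(1/z, 1 - φ)`. -/
theorem small_change :
    ∃ C : ℝ, 0 < C ∧
      ∀ (n : ℕ) (φ : ℝ), 0 ≤ φ → φ < 1 →
        ∀ x y z : Fin n, x < y → y < z →
          (z.1 : ℝ) - (y.1 : ℝ) ≤ min ((y.1 : ℝ) + 1) (1 / (1 - φ)) →
          ∀ s : ℕ, 1 ≤ s → s < y.1 + 1 →
            |mCondProb φ 1 (fun π => π.symm z < π.symm x)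
                (fun π => relPos π (y.1 + 1) x = s - 1) -
              mCondProb φ 1 (fun π => π.symm z < π.symm x)
                (fun π => relPos π (y.1 + 1) x = s)| ≤
              C * max (1 / ((z.1 : ℝ) + 1)) (1 - φ) := by
  refine ⟨10000, by norm_num, ?_⟩
  intro n φ hφ0 hφ1 x y z hxy hyz hmin s hs1 hs2
  have hu : (0:ℝ) < 1 - φ := by linarith
  have hxy' : x.1 < y.1 := hxy
  have hyz' : y.1 < z.1 := hyz
  rcases lt_or_ge φ (1/2) with hc | hc
  · -- trivial branch: both conditional probabilities lie in [0,1]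
    have h1 := mCondProb_mem_Icc φ hφ0 (fun π : Equiv.Perm (Fin n) => π.symm z < π.symm x)
      (fun π => relPos π (y.1 + 1) x = s - 1)
    have h2 := mCondProb_mem_Icc φ hφ0 (fun π : Equiv.Perm (Fin n) => π.symm z < π.symm x)
      (fun π => relPos π (y.1 + 1) x = s)
    have habs : |mCondProb φ 1 (fun π => π.symm z < π.symm x)
        (fun π => relPos π (y.1 + 1) x = s - 1) -
      mCondProb φ 1 (fun π => π.symm z < π.symm x)
        (fun π => relPos π (y.1 + 1) x = s)| ≤ 1 := by
      rw [abs_sub_le_iff]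
      constructor <;> linarith [h1.1, h1.2, h2.1, h2.2]
    have hmax : (1:ℝ)/2 ≤ max (1 / ((z.1 : ℝ) + 1)) (1 - φ) := by
      have : (1:ℝ)/2 ≤ 1 - φ := by linarith
      exact le_trans this (le_max_right _ _)
    linarith [habs, hmax]
  · -- main branch
    have hφpos : (0:ℝ) < φ := by linarith
    have e1 := mCondProb_eq_gA φ hφpos x y z hxy hyz (s-1) (by omega)
    have e2 := mCondProb_eq_gA φ hφpos x y z hxy hyz s (by omega)
    rw [e1, e2]
    set dd := z.1 - (y.1+1) with hdd
    have hsplit : s = (s-1) + 1 := by omega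
    set p := s - 1 with hp
    rw [hsplit]
    have hincr := gA_incr hφpos (le_of_lt hφ1) z.1 dd (by omega) p
    have habs : |gA φ z.1 dd p - gA φ z.1 dd (p+1)|
        = gA φ z.1 dd (p+1) - gA φ z.1 dd p := by
      rw [abs_sub_comm, abs_of_nonneg hincr.1]
    rw [habs]
    -- constraints
    have hmin1 := le_min_iff.mp hmin
    have hcast1 : ((z.1 - y.1 : ℕ):ℝ) = (z.1:ℝ) - (y.1:ℝ) := by
      rw [Nat.cast_sub (le_of_lt hyz')]
    have hk0Y : z.1 - y.1 ≤ y.1 + 1 := by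
      have h := hmin1.1
      rw [← hcast1] at h
      exact_mod_cast h
    have hknat : z.1 - (y.1+1) + 1 = z.1 - y.1 := by omega
    have hk : ((z.1 - (y.1+1) + 1 : ℕ):ℝ) * (1 - φ) ≤ 1 := by
      rw [hknat, hcast1]
      have h := hmin1.2
      rw [le_div_iff₀ hu] at h
      linarith
    have hsum := sum_invZg_le hc hφ1 (y.1+1) z.1 (by omega) (by omega)
      (by omega) hk
    have hKb := Kb_le_exp (le_of_lt hφpos) z.1 dd
    have h1Z : (0:ℝ) ≤ 1 / Zg φ (z.1+1) := div_nonneg zero_le_one (Zg_nonneg (le_of_lt hφpos) _)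
    have hexp : Real.exp (∑ e ∈ Finset.range dd, 1 / Zg φ (z.1 - e)) ≤ 5000 :=
      le_trans (Real.exp_le_exp.mpr hsum) exp_exp_two_le
    have hZb : 1 / Zg φ (z.1+1) ≤ 2 * max (1 / ((z.1:ℝ) + 1)) (1 - φ) := by
      have h := invZg_le_max (le_of_lt hφpos) hφ1 (z.1+1) (by omega)
      have hcast2 : (((z.1+1 : ℕ)):ℝ) = (z.1:ℝ) + 1 := by push_cast; ring
      rw [hcast2] at h
      exact h
    calc gA φ z.1 dd (p+1) - gA φ z.1 dd p
        ≤ Kb φ z.1 dd := hincr.2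
      _ ≤ (1 / Zg φ (z.1+1)) * Real.exp (∑ e ∈ Finset.range dd, 1 / Zg φ (z.1 - e)) := hKb
      _ ≤ (1 / Zg φ (z.1+1)) * 5000 := mul_le_mul_of_nonneg_left hexp h1Z
      _ ≤ (2 * max (1 / ((z.1:ℝ) + 1)) (1 - φ)) * 5000 := by
          refine mul_le_mul_of_nonneg_right hZb (by norm_num)
      _ = 10000 * max (1 / ((z.1:ℝ) + 1)) (1 - φ) := by ring

end Mallows
end

section
/- For any permutation π of [n], the sum over t = 1 to n of (v_π^{←}[t] + v_π^{→}[t])² is at most 4·‖v_{id} − v_π‖². -/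
open scoped Classical
open Finset

namespace Mallows

section AuxST15

variable {n : ℕ}


noncomputable def SL (π : Equiv.Perm (Fin n)) (t : Fin n) : Finset (Fin n) :=
  univ.filter (fun j => j < t ∧ π.symm t < π.symm j)

noncomputable def SR (π : Equiv.Perm (Fin n)) (t : Fin n) : Finset (Fin n) :=
  univ.filter (fun j => t < j ∧ π.symm j < π.symm t)

noncomputable def dd (π : Equiv.Perm (Fin n)) (t : Fin n) : ℤ :=
  ((π.symm t : Fin n) : ℤ) - (t : ℤ)

-- balance identity: R - L = d
lemma balance (π : Equiv.Perm (Fin n)) (t : Fin n) :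
    ((SR π t).card : ℤ) - (SL π t).card = dd π t := by
  have hA : (univ.filter fun j : Fin n => π.symm j < π.symm t).card = ((π.symm t : Fin n) : ℕ) := by
    have : (univ.filter fun j : Fin n => π.symm j < π.symm t)
        = (Iio (π.symm t)).map π.toEmbedding := by
      ext j
      simp only [Finset.mem_filter, Finset.mem_univ, true_and, Finset.mem_map, Finset.mem_Iio,
        Equiv.toEmbedding_apply]
      constructor
      · intro h; exact ⟨π.symm j, h, π.apply_symm_apply j⟩
      · rintro ⟨k, hk, rfl⟩; simpa using hk
    rw [this, Finset.card_map, Fin.card_Iio]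
  have hB : (univ.filter fun j : Fin n => j < t).card = (t : ℕ) := by
    have : (univ.filter fun j : Fin n => j < t) = Iio t := by
      ext j; simp
    rw [this, Fin.card_Iio]
  -- split hA by j < t
  have split1 : (univ.filter fun j : Fin n => π.symm j < π.symm t).card
      = (univ.filter fun j : Fin n => π.symm j < π.symm t ∧ j < t).card + (SR π t).card := by
    have hsplit := Finset.card_filter_add_card_filter_not
      (s := univ.filter fun j : Fin n => π.symm j < π.symm t) (p := fun j => j < t)
    rw [Finset.filter_filter, Finset.filter_filter] at hsplit
    have hSR : univ.filter (fun j : Fin n => π.symm j < π.symm t ∧ ¬ j < t) = SR π t := by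
      unfold SR
      ext j
      simp only [Finset.mem_filter, Finset.mem_univ, true_and]
      constructor
      · rintro ⟨h1, h2⟩
        have : j ≠ t := fun h => by subst h; exact lt_irrefl _ h1
        exact ⟨lt_of_le_of_ne (not_lt.mp h2) (Ne.symm this), h1⟩
      · rintro ⟨h1, h2⟩
        exact ⟨h2, not_lt.mpr h1.le⟩
    rw [hSR] at hsplit
    omega
  have split2 : (univ.filter fun j : Fin n => j < t).card
      = (univ.filter fun j : Fin n => j < t ∧ π.symm j < π.symm t).card + (SL π t).card := by
    have hsplit := Finset.card_filter_add_card_filter_not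
      (s := univ.filter fun j : Fin n => j < t) (p := fun j => π.symm j < π.symm t)
    rw [Finset.filter_filter, Finset.filter_filter] at hsplit
    have hSL : univ.filter (fun j : Fin n => j < t ∧ ¬ π.symm j < π.symm t) = SL π t := by
      unfold SL
      ext j
      simp only [Finset.mem_filter, Finset.mem_univ, true_and]
      constructor
      · rintro ⟨h1, h2⟩
        have : π.symm j ≠ π.symm t := fun h => by
          have := π.symm.injective h; subst this; exact lt_irrefl _ h1
        exact ⟨h1, lt_of_le_of_ne (not_lt.mp h2) (Ne.symm this)⟩
      · rintro ⟨h1, h2⟩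
        exact ⟨h1, not_lt.mpr h2.le⟩
    rw [hSL] at hsplit
    omega
  have hcomm : (univ.filter fun j : Fin n => π.symm j < π.symm t ∧ j < t).card
      = (univ.filter fun j : Fin n => j < t ∧ π.symm j < π.symm t).card := by
    congr 1; ext j; simp [and_comm]
  unfold dd
  have e1 : ((π.symm t : Fin n) : ℕ) = (univ.filter fun j : Fin n => j < t ∧ π.symm j < π.symm t).card + (SR π t).card := by
    rw [← hA, split1, hcomm]
  have e2 : ((t : Fin n) : ℕ) = (univ.filter fun j : Fin n => j < t ∧ π.symm j < π.symm t).card + (SL π t).card := by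
    rw [← hB, split2]
  rw [show ((π.symm t : Fin n) : ℤ) = ((((π.symm t : Fin n) : ℕ)) : ℤ) from rfl]
  rw [e1]
  have : ((t : Fin n) : ℤ) = (((univ.filter fun j : Fin n => j < t ∧ π.symm j < π.symm t).card + (SL π t).card : ℕ) : ℤ) := by
    exact_mod_cast congrArg (Nat.cast : ℕ → ℤ) e2
  rw [this]
  push_cast
  ring


lemma key {α : Type*} [DecidableEq α] (f : α → ℤ) (s : Finset α) :
    Set.InjOn f s → ∀ c : ℤ, (∀ j ∈ s, c < f j) →
    ∑ i ∈ Finset.range s.card, (c + 1 + (i : ℤ)) ≤ ∑ j ∈ s, f j := by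
  induction s using Finset.strongInduction with
  | _ s ih =>
    intro hinj c hc
    rcases s.eq_empty_or_nonempty with rfl | hne
    · simp
    · obtain ⟨j0, hj0, hmin⟩ := s.exists_min_image f hne
      have hsub : s.erase j0 ⊂ s := Finset.erase_ssubset hj0
      have h1 : ∀ j ∈ s.erase j0, f j0 < f j := by
        intro j hj
        have hjs := Finset.mem_of_mem_erase hj
        have hne' : j ≠ j0 := Finset.ne_of_mem_erase hj
        have hle := hmin j hjs
        rcases lt_or_eq_of_le hle with h | h
        · exact h
        · exact absurd (hinj hjs hj0 h.symm) hne'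
      have IH := ih _ hsub (hinj.mono (by exact_mod_cast Finset.erase_subset j0 s)) (f j0) h1
      have hcard : s.card = (s.erase j0).card + 1 :=
        (Finset.card_erase_add_one hj0).symm
      rw [hcard, Finset.sum_range_succ']
      have hsum : ∑ j ∈ s, f j = f j0 + ∑ j ∈ s.erase j0, f j :=
        (Finset.add_sum_erase s f hj0).symm
      rw [hsum]
      have hstep : ∑ i ∈ Finset.range (s.erase j0).card, (c + 1 + ((i:ℕ) + 1 : ℤ))
          ≤ ∑ i ∈ Finset.range (s.erase j0).card, (f j0 + 1 + (i : ℤ)) := by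
        apply Finset.sum_le_sum
        intro i _
        have := hc j0 hj0
        push_cast
        omega
      have hc0 := hc j0 hj0
      push_cast at hstep ⊢
      linarith [IH, hstep, hc0]

lemma range_sum_int (L : ℕ) (a : ℤ) :
    ∑ i ∈ Finset.range L, (a + 2 * (i : ℤ)) = L * a + L * (L - 1) := by
  induction L with
  | zero => simp
  | succ m ih => rw [Finset.sum_range_succ, ih]; push_cast; ring

lemma SL_bound (π : Equiv.Perm (Fin n)) (t : Fin n) :
    ((SL π t).card : ℤ) ^ 2 ≤ ∑ j ∈ SL π t, (dd π j - dd π t) := by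
  have h1 : ∑ i ∈ Finset.range (SL π t).card, (((π.symm t : Fin n) : ℤ) + 1 + (i : ℤ))
      ≤ ∑ j ∈ SL π t, ((π.symm j : Fin n) : ℤ) := by
    apply key
    · intro a _ b _ h
      simp only at h
      exact π.symm.injective (Fin.val_injective (by exact_mod_cast h))
    · intro j hj
      simp only [SL, Finset.mem_filter] at hj
      have : ((π.symm t : Fin n) : ℕ) < ((π.symm j : Fin n) : ℕ) := hj.2.2
      show ((π.symm t : Fin n) : ℤ) < ((π.symm j : Fin n) : ℤ)
      exact_mod_cast this
  have h2 : ∑ i ∈ Finset.range (SL π t).card, (-((t : Fin n) : ℤ) + 1 + (i : ℤ))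
      ≤ ∑ j ∈ SL π t, (-((j : Fin n) : ℤ)) := by
    apply key
    · intro a _ b _ h
      simp only at h
      exact Fin.val_injective (by omega)
    · intro j hj
      simp only [SL, Finset.mem_filter] at hj
      have : ((j : Fin n) : ℕ) < ((t : Fin n) : ℕ) := hj.2.1
      show -((t : Fin n) : ℤ) < -((j : Fin n) : ℤ)
      omega
  have e : ∑ j ∈ SL π t, dd π j
      = (∑ j ∈ SL π t, ((π.symm j : Fin n) : ℤ)) + ∑ j ∈ SL π t, (-((j : Fin n) : ℤ)) := by
    rw [← Finset.sum_add_distrib]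
    apply Finset.sum_congr rfl
    intro j _
    unfold dd; ring
  have hsum : ∑ j ∈ SL π t, (dd π j - dd π t)
      = (∑ j ∈ SL π t, dd π j) - (SL π t).card * dd π t := by
    rw [Finset.sum_sub_distrib, Finset.sum_const, nsmul_eq_mul]
  have hcomb : (∑ i ∈ Finset.range (SL π t).card, (((π.symm t : Fin n) : ℤ) + 1 + (i : ℤ)))
      + (∑ i ∈ Finset.range (SL π t).card, (-((t : Fin n) : ℤ) + 1 + (i : ℤ)))
      = (SL π t).card * dd π t + ((SL π t).card : ℤ)^2 + (SL π t).card := by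
    rw [← Finset.sum_add_distrib]
    have h3 : ∀ i ∈ Finset.range (SL π t).card,
        ((((π.symm t : Fin n) : ℤ) + 1 + (i : ℤ)) + (-((t : Fin n) : ℤ) + 1 + (i : ℤ)))
        = (dd π t + 2) + 2 * (i : ℤ) := by
      intro i _; unfold dd; ring
    rw [Finset.sum_congr rfl h3, range_sum_int]
    push_cast
    ring
  rw [hsum, e]
  have hc : (0 : ℤ) ≤ (SL π t).card := Int.natCast_nonneg _
  nlinarith [h1, h2, hcomb]

lemma SR_bound (π : Equiv.Perm (Fin n)) (t : Fin n) :
    ((SR π t).card : ℤ) ^ 2 ≤ ∑ j ∈ SR π t, (dd π t - dd π j) := by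
  have h1 : ∑ i ∈ Finset.range (SR π t).card, (((t : Fin n) : ℤ) + 1 + (i : ℤ))
      ≤ ∑ j ∈ SR π t, ((j : Fin n) : ℤ) := by
    apply key
    · intro a _ b _ h
      simp only at h
      exact Fin.val_injective (by exact_mod_cast h)
    · intro j hj
      simp only [SR, Finset.mem_filter] at hj
      have : ((t : Fin n) : ℕ) < ((j : Fin n) : ℕ) := hj.2.1
      show ((t : Fin n) : ℤ) < ((j : Fin n) : ℤ)
      exact_mod_cast this
  have h2 : ∑ i ∈ Finset.range (SR π t).card, (-((π.symm t : Fin n) : ℤ) + 1 + (i : ℤ))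
      ≤ ∑ j ∈ SR π t, (-((π.symm j : Fin n) : ℤ)) := by
    apply key
    · intro a _ b _ h
      simp only at h
      exact π.symm.injective (Fin.val_injective (by omega))
    · intro j hj
      simp only [SR, Finset.mem_filter] at hj
      have : ((π.symm j : Fin n) : ℕ) < ((π.symm t : Fin n) : ℕ) := hj.2.2
      show -((π.symm t : Fin n) : ℤ) < -((π.symm j : Fin n) : ℤ)
      omega
  have e : ∑ j ∈ SR π t, (-(dd π j))
      = (∑ j ∈ SR π t, ((j : Fin n) : ℤ)) + ∑ j ∈ SR π t, (-((π.symm j : Fin n) : ℤ)) := by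
    rw [← Finset.sum_add_distrib]
    apply Finset.sum_congr rfl
    intro j _
    unfold dd; ring
  have hsum : ∑ j ∈ SR π t, (dd π t - dd π j)
      = (SR π t).card * dd π t + ∑ j ∈ SR π t, (-(dd π j)) := by
    rw [show ((SR π t).card : ℤ) * dd π t = ∑ _j ∈ SR π t, dd π t by
      rw [Finset.sum_const, nsmul_eq_mul]]
    rw [← Finset.sum_add_distrib]
    apply Finset.sum_congr rfl
    intro j _
    ring
  have hcomb : (∑ i ∈ Finset.range (SR π t).card, (((t : Fin n) : ℤ) + 1 + (i : ℤ)))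
      + (∑ i ∈ Finset.range (SR π t).card, (-((π.symm t : Fin n) : ℤ) + 1 + (i : ℤ)))
      = -(((SR π t).card : ℤ) * dd π t) + ((SR π t).card : ℤ)^2 + (SR π t).card := by
    rw [← Finset.sum_add_distrib]
    have h3 : ∀ i ∈ Finset.range (SR π t).card,
        ((((t : Fin n) : ℤ) + 1 + (i : ℤ)) + (-((π.symm t : Fin n) : ℤ) + 1 + (i : ℤ)))
        = (-dd π t + 2) + 2 * (i : ℤ) := by
      intro i _; unfold dd; ring
    rw [Finset.sum_congr rfl h3, range_sum_int]
    push_cast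
    ring
  rw [hsum, e]
  have hc : (0 : ℤ) ≤ (SR π t).card := Int.natCast_nonneg _
  nlinarith [h1, h2, hcomb]

lemma swapL (π : Equiv.Perm (Fin n)) :
    ∑ t : Fin n, ∑ j ∈ SL π t, dd π j = ∑ j : Fin n, ((SR π j).card : ℤ) * dd π j := by
  have e1 : ∀ t : Fin n, ∑ j ∈ SL π t, dd π j
      = ∑ j : Fin n, if j < t ∧ π.symm t < π.symm j then dd π j else 0 := by
    intro t; rw [SL, Finset.sum_filter]
  rw [Finset.sum_congr rfl fun t _ => e1 t, Finset.sum_comm]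
  apply Finset.sum_congr rfl
  intro j _
  rw [← Finset.sum_filter]
  rw [show (univ.filter fun t : Fin n => j < t ∧ π.symm t < π.symm j) = SR π j from rfl]
  rw [Finset.sum_const, nsmul_eq_mul]

lemma swapR (π : Equiv.Perm (Fin n)) :
    ∑ t : Fin n, ∑ j ∈ SR π t, dd π j = ∑ j : Fin n, ((SL π j).card : ℤ) * dd π j := by
  have e1 : ∀ t : Fin n, ∑ j ∈ SR π t, dd π j
      = ∑ j : Fin n, if t < j ∧ π.symm j < π.symm t then dd π j else 0 := by
    intro t; rw [SR, Finset.sum_filter]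
  rw [Finset.sum_congr rfl fun t _ => e1 t, Finset.sum_comm]
  apply Finset.sum_congr rfl
  intro j _
  rw [← Finset.sum_filter]
  rw [show (univ.filter fun t : Fin n => t < j ∧ π.symm j < π.symm t) = SL π j from rfl]
  rw [Finset.sum_const, nsmul_eq_mul]

lemma main_int (π : Equiv.Perm (Fin n)) :
    ∑ t : Fin n, (((SL π t).card : ℤ) + ((SR π t).card : ℤ)) ^ 2
      ≤ 4 * ∑ t : Fin n, dd π t ^ 2 := by
  have hper : ∀ t : Fin n, ((SL π t).card : ℤ) ^ 2 + ((SR π t).card : ℤ) ^ 2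
      ≤ (∑ j ∈ SL π t, dd π j) - (∑ j ∈ SR π t, dd π j) + dd π t * dd π t := by
    intro t
    have h1 := SL_bound π t
    have h2 := SR_bound π t
    have hb := balance π t
    have e1 : ∑ j ∈ SL π t, (dd π j - dd π t)
        = (∑ j ∈ SL π t, dd π j) - (SL π t).card * dd π t := by
      rw [Finset.sum_sub_distrib, Finset.sum_const, nsmul_eq_mul]
    have e2 : ∑ j ∈ SR π t, (dd π t - dd π j)
        = ((SR π t).card : ℤ) * dd π t - ∑ j ∈ SR π t, dd π j := by
      rw [Finset.sum_sub_distrib, Finset.sum_const, nsmul_eq_mul]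
    rw [e1] at h1
    rw [e2] at h2
    have hb2 : (((SR π t).card : ℤ) - ((SL π t).card : ℤ)) * dd π t = dd π t * dd π t := by
      rw [hb]
    ring_nf at hb2
    nlinarith [h1, h2, hb2]
  have hsum2 : ∑ t : Fin n, ((∑ j ∈ SL π t, dd π j) - (∑ j ∈ SR π t, dd π j) + dd π t * dd π t)
      = 2 * ∑ t : Fin n, dd π t ^ 2 := by
    rw [Finset.sum_add_distrib, Finset.sum_sub_distrib, swapL, swapR]
    have e3 : ∑ j : Fin n, ((SR π j).card : ℤ) * dd π j - ∑ j : Fin n, ((SL π j).card : ℤ) * dd π j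
        = ∑ j : Fin n, dd π j ^ 2 := by
      rw [← Finset.sum_sub_distrib]
      apply Finset.sum_congr rfl
      intro j _
      rw [← sub_mul, balance π j]
      ring
    rw [e3]
    have e4 : ∑ t : Fin n, dd π t * dd π t = ∑ t : Fin n, dd π t ^ 2 :=
      Finset.sum_congr rfl fun t _ => (sq (dd π t)).symm
    rw [e4]
    ring
  calc ∑ t : Fin n, (((SL π t).card : ℤ) + ((SR π t).card : ℤ)) ^ 2
      ≤ ∑ t : Fin n, 2 * (((SL π t).card : ℤ) ^ 2 + ((SR π t).card : ℤ) ^ 2) := by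
        apply Finset.sum_le_sum
        intro t _
        nlinarith [sq_nonneg (((SL π t).card : ℤ) - ((SR π t).card : ℤ))]
    _ ≤ ∑ t : Fin n, 2 * ((∑ j ∈ SL π t, dd π j) - (∑ j ∈ SR π t, dd π j) + dd π t * dd π t) := by
        apply Finset.sum_le_sum
        intro t _
        linarith [hper t]
    _ = 2 * ∑ t : Fin n, ((∑ j ∈ SL π t, dd π j) - (∑ j ∈ SR π t, dd π j) + dd π t * dd π t) :=
        (Finset.mul_sum _ _ _).symm
    _ = 4 * ∑ t : Fin n, dd π t ^ 2 := by rw [hsum2]; ring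

end AuxST15

/-- Adjustment-vector bound. For any permutation `π` of `[n]`,
`∑ t (v_π^{←}[t] + v_π^{→}[t])² ≤ 4 ‖v_id - v_π‖²`. -/
theorem adjustment_sum_bound (n : ℕ) (π : Equiv.Perm (Fin n)) :
    ∑ t : Fin n, (leftAdj 1 π t + rightAdj 1 π t) ^ 2 ≤ 4 * ‖posVec 1 - posVec π‖ ^ 2 := by
  have hmain := main_int π
  have hL : ∀ t : Fin n, leftAdj 1 π t = ((SL π t).card : ℝ) := by
    intro t
    simp only [leftAdj, SL]
    norm_num
    rfl
  have hR : ∀ t : Fin n, rightAdj 1 π t = ((SR π t).card : ℝ) := by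
    intro t
    simp only [rightAdj, SR]
    norm_num
    rfl
  have hnorm : ‖posVec 1 - posVec π‖ ^ 2 = ∑ t : Fin n, ((dd π t : ℤ) : ℝ) ^ 2 := by
    rw [EuclideanSpace.norm_eq, Real.sq_sqrt (by positivity)]
    apply Finset.sum_congr rfl
    intro t _
    have ht : (posVec (n := n) 1 - posVec π) t = -((dd π t : ℤ) : ℝ) := by
      simp only [PiLp.sub_apply, posVec, dd]
      push_cast
      simp
      rfl
    rw [ht]
    rw [norm_neg, Real.norm_eq_abs, sq_abs]
  calc ∑ t : Fin n, (leftAdj 1 π t + rightAdj 1 π t) ^ 2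
      = ∑ t : Fin n, (((((SL π t).card : ℤ) + ((SR π t).card : ℤ)) ^ 2 : ℤ) : ℝ) := by
        apply Finset.sum_congr rfl
        intro t _
        rw [hL t, hR t]
        push_cast
        ring
    _ = ((∑ t : Fin n, (((SL π t).card : ℤ) + ((SR π t).card : ℤ)) ^ 2 : ℤ) : ℝ) := by
        push_cast
        rfl
    _ ≤ ((4 * ∑ t : Fin n, dd π t ^ 2 : ℤ) : ℝ) := by exact_mod_cast hmain
    _ = 4 * ∑ t : Fin n, ((dd π t : ℤ) : ℝ) ^ 2 := by push_cast; ring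
    _ = 4 * ‖posVec 1 - posVec π‖ ^ 2 := by rw [hnorm]

end Mallows
end
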